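/- arXiv:0906.2484 — 4 statements merged into one kernel-verified Lean document; each statement's English description precedes it below -/
import Mathlib

section
/- Fix δ ∈ (0,1/3], d ≥ 2 and integers 0 ≤ k ≤ n. With μ, K(n,k), 𝒦^d(n,k) and 𝒢(n,k) as in the triadic construction, define Γ(n,k) = ∪_{Q ∈ 𝒦^d(n,k)} Sk(Q) ∪ ∪_{I_1,…,I_d ∈ 𝒢(n,k)} Sk(I_1×⋯×I_d), where Sk denotes the skeleton of a box. Then Γ(n,k) is a connected subset of ℝ^d. -/
open MeasureTheory Set

noncomputable section

/-- The number of ternary (base-3) digits of `i` equal to `1`. -/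
def ternaryOnes (i : ℕ) : ℕ := (Nat.digits 3 i).count 1

/-- The triadic mass assignment determining the measure `μ`. -/
def ternarySpec (δ : ℝ) (μ : Measure ℝ) : Prop :=
  ∀ (j : ℤ) (n i : ℕ), i < 3 ^ n →
    μ (Set.Ico ((j : ℝ) + (i : ℝ) / 3 ^ n) ((j : ℝ) + ((i : ℝ) + 1) / 3 ^ n)) =
      ENNReal.ofReal (δ ^ (n - ternaryOnes i) * (1 - 2 * δ) ^ ternaryOnes i)

/-- The triadic interval `[i·3⁻ⁿ, (i+1)·3⁻ⁿ) ⊆ [0,1)` of generation `n`, `0 ≤ i < 3 ^ n`. -/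
def triIco (n i : ℕ) : Set ℝ := Set.Ico ((i : ℝ) / 3 ^ n) (((i : ℝ) + 1) / 3 ^ n)

/-- Indices `0 ≤ i < 3 ^ n` of the "heavy" triadic intervals of generation `n` inside `[0,1)`,
those with `μ(I) ≥ δ ^ k · (1 - 2δ) ^ (n - k)`. -/
def goodIdx (δ : ℝ) (μ : Measure ℝ) (n k : ℕ) : Set ℕ :=
  {i | i < 3 ^ n ∧ ENNReal.ofReal (δ ^ k * (1 - 2 * δ) ^ (n - k)) ≤ μ (triIco n i)}

/-- `K(n,k)`: the union of the triadic intervals `I ⊆ [0,1)` of generation `n` with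
`μ(I) ≥ δ ^ k · (1 - 2δ) ^ (n - k)`. -/
def Kset (δ : ℝ) (μ : Measure ℝ) (n k : ℕ) : Set ℝ := ⋃ i ∈ goodIdx δ μ n k, triIco n i

/-- The gaps of a set `K ⊆ ℝ`: the bounded connected components of `ℝ \ K`. -/
def gaps (K : Set ℝ) : Set (Set ℝ) :=
  {C | Bornology.IsBounded C ∧ ∃ x ∈ Kᶜ, C = connectedComponentIn Kᶜ x}

/-- The skeleton of the box `I 0 × ⋯ × I (d-1)`: the union over `j` of the products
`∂I 0 × ⋯ × ∂I (j-1) × I j × ∂I (j+1) × ⋯ × ∂I (d-1)`, i.e. the union of the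
one-dimensional edges of the box. -/
def Sk (d : ℕ) (I : Fin d → Set ℝ) : Set (Fin d → ℝ) :=
  ⋃ j : Fin d, Set.pi Set.univ fun m => if m = j then I m else frontier (I m)

/-- `Γ(n,k)`: the union of the skeletons of the cubes of `𝒦^d(n,k)` together with the
skeletons of all boxes `I₁ × ⋯ × I_d` with each `Iⱼ` a gap of `K(n,k)`. -/
def GammaNK (d : ℕ) (δ : ℝ) (μ : Measure ℝ) (n k : ℕ) : Set (Fin d → ℝ) :=
  (⋃ f ∈ {f : Fin d → ℕ | ∀ j, f j ∈ goodIdx δ μ n k}, Sk d fun j => triIco n (f j)) ∪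
    ⋃ I ∈ {I : Fin d → Set ℝ | ∀ j, I j ∈ gaps (Kset δ μ n k)}, Sk d I

namespace GammaAux

def ep (n i : ℕ) : ℝ := (i : ℝ) / 3 ^ n

lemma ep_lt_ep {n i j : ℕ} (h : i < j) : ep n i < ep n j := by
  unfold ep
  apply div_lt_div_of_pos_right ?_ (by positivity)
  exact_mod_cast h

lemma ep_le_ep {n i j : ℕ} (h : i ≤ j) : ep n i ≤ ep n j := by
  rcases h.lt_or_eq with h | h
  · exact (ep_lt_ep h).le
  · simp [h]

lemma ep_lt_iff {n i j : ℕ} : ep n i < ep n j ↔ i < j := by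
  constructor
  · intro h
    by_contra hc
    exact absurd (ep_le_ep (not_lt.1 hc)) (not_le.2 h)
  · exact ep_lt_ep

lemma ep_succ {n i : ℕ} : ep n (i + 1) = ep n i + 1 / 3 ^ n := by
  unfold ep; push_cast; ring

lemma triIco_eq (n i : ℕ) : triIco n i = Ico (ep n i) (ep n (i + 1)) := by
  unfold triIco ep; push_cast; rfl

lemma ep_lt_succ (n i : ℕ) : ep n i < ep n (i + 1) := ep_lt_ep (Nat.lt_succ_self i)

lemma frontier_triIco (n i : ℕ) : frontier (triIco n i) = {ep n i, ep n (i + 1)} := by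
  rw [triIco_eq, frontier_Ico (ep_lt_succ n i)]

lemma closure_triIco (n i : ℕ) : closure (triIco n i) = Icc (ep n i) (ep n (i + 1)) := by
  rw [triIco_eq, closure_Ico (ep_lt_succ n i).ne]

lemma left_mem_triIco (n i : ℕ) : ep n i ∈ triIco n i := by
  rw [triIco_eq]; exact ⟨le_refl _, ep_lt_succ n i⟩


variable (n : ℕ) (G : Set ℕ)

def KG : Set ℝ := ⋃ i ∈ G, triIco n i
def EK : Set ℝ := ⋃ i ∈ G, frontier (triIco n i)
def GapU : Set ℝ := ⋃ U ∈ gaps (KG n G), U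
def Egap : Set ℝ := ⋃ U ∈ gaps (KG n G), frontier U
def WSet : Set ℝ := KG n G ∪ GapU n G

variable {n G}

section Basic
variable (hfin : G.Finite) (hne : G.Nonempty)

/-- left endpoint index -/
def AIdx : ℕ := sInf G
/-- right endpoint index -/
noncomputable def BIdx (hfin : G.Finite) : ℕ := sSup G

lemma AIdx_mem (hne : G.Nonempty) : AIdx (G := G) ∈ G := Nat.sInf_mem hne

lemma BIdx_mem (hfin : G.Finite) (hne : G.Nonempty) : BIdx hfin ∈ G :=
  Nat.sSup_mem hne hfin.bddAbove

lemma le_BIdx (hfin : G.Finite) {i : ℕ} (hi : i ∈ G) : i ≤ BIdx hfin :=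
  le_csSup hfin.bddAbove hi

lemma AIdx_le {i : ℕ} (hi : i ∈ G) : AIdx (G := G) ≤ i := Nat.sInf_le hi

lemma KG_subset (hfin : G.Finite) : KG n G ⊆ Ico (ep n (AIdx (G := G))) (ep n (BIdx hfin + 1)) := by
  intro x hx
  obtain ⟨i, hi, hxi⟩ := mem_iUnion₂.1 hx
  rw [triIco_eq] at hxi
  exact ⟨le_trans (ep_le_ep (AIdx_le hi)) hxi.1,
    lt_of_lt_of_le hxi.2 (ep_le_ep (Nat.succ_le_succ (le_BIdx hfin hi)))⟩

end Basic

lemma closure_KG (hfin : G.Finite) :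
    closure (KG n G) = ⋃ i ∈ G, Icc (ep n i) (ep n (i + 1)) := by
  unfold KG
  rw [hfin.closure_biUnion]
  exact iUnion₂_congr fun i _ => closure_triIco n i

lemma EK_subset_closure (hfin : G.Finite) : EK n G ⊆ closure (KG n G) := by
  rw [closure_KG hfin]
  intro x hx
  obtain ⟨i, hi, hxi⟩ := mem_iUnion₂.1 hx
  rw [frontier_triIco] at hxi
  refine mem_iUnion₂.2 ⟨i, hi, ?_⟩
  rcases hxi with h | h <;> subst h
  · exact ⟨le_refl _, (ep_lt_succ n i).le⟩
  · exact ⟨(ep_lt_succ n i).le, le_refl _⟩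

lemma closure_KG_sub (hfin : G.Finite) : closure (KG n G) ⊆ KG n G ∪ EK n G := by
  rw [closure_KG hfin]
  intro x hx
  obtain ⟨i, hi, hxi⟩ := mem_iUnion₂.1 hx
  rcases lt_or_eq_of_le hxi.2 with h | h
  · exact Or.inl (mem_iUnion₂.2 ⟨i, hi, by rw [triIco_eq]; exact ⟨hxi.1, h⟩⟩)
  · exact Or.inr (mem_iUnion₂.2 ⟨i, hi, by rw [frontier_triIco]; exact Or.inr h⟩)

lemma KG_subset_closure : KG n G ⊆ closure (KG n G) := subset_closure

/-- near any point not in `K`, a right half-neighbourhood misses `K`. -/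
lemma right_free (hfin : G.Finite) {x : ℝ} (hx : x ∉ KG n G) :
    ∃ ε > 0, Ico x (x + ε) ∩ KG n G = ∅ := by
  classical
  set F : Finset ℕ := hfin.toFinset.filter (fun i => x < ep n i) with hF
  have key : ∀ ε > 0, (∀ i ∈ F, x + ε ≤ ep n i) → Ico x (x + ε) ∩ KG n G = ∅ := by
    intro ε hε hbound
    rw [Set.eq_empty_iff_forall_notMem]
    rintro y ⟨⟨hxy, hyε⟩, hyK⟩
    obtain ⟨i, hi, hyi⟩ := mem_iUnion₂.1 hyK
    rw [triIco_eq] at hyi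
    by_cases hcase : x < ep n i
    · have hiF : i ∈ F := by
        rw [hF, Finset.mem_filter]
        exact ⟨hfin.mem_toFinset.2 hi, hcase⟩
      exact absurd (lt_of_le_of_lt (le_trans (hbound i hiF) hyi.1) hyε) (lt_irrefl _)
    · push_neg at hcase
      exact hx (mem_iUnion₂.2 ⟨i, hi, by
        rw [triIco_eq]; exact ⟨hcase, lt_of_le_of_lt hxy hyi.2⟩⟩)
  rcases F.eq_empty_or_nonempty with hFe | hFne
  · exact ⟨1, one_pos, key 1 one_pos (by simp [hFe])⟩
  · set ε := (F.image (fun i => ep n i - x)).min' (hFne.image _) with hεdef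
    have hεpos : 0 < ε := by
      rw [hεdef]
      apply lt_of_lt_of_le ?_ (le_refl _)
      obtain ⟨i, hi, hmin⟩ := Finset.mem_image.1 ((F.image (fun i => ep n i - x)).min'_mem (hFne.image _))
      rw [← hmin]
      have : x < ep n i := (Finset.mem_filter.1 hi).2
      linarith
    refine ⟨ε, hεpos, key ε hεpos fun i hi => ?_⟩
    have : ε ≤ ep n i - x := Finset.min'_le _ _ (Finset.mem_image.2 ⟨i, hi, rfl⟩)
    linarith

lemma notMem_closure_free {K : Set ℝ} {q : ℝ} (h : q ∉ closure K) :
    ∃ ε > 0, ∀ t ∈ Ioo (q - ε) (q + ε), t ∉ closure K := by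
  obtain ⟨ε, hε, hb⟩ := Metric.isOpen_iff.1 isClosed_closure.isOpen_compl q h
  exact ⟨ε, hε, fun t ht => hb (by rw [Real.ball_eq_Ioo]; exact ht)⟩

lemma gap_anatomy (hfin : G.Finite) {U : Set ℝ} (hU : U ∈ gaps (KG n G)) :
    ∃ i ∈ G, ∃ j ∈ G, i + 1 < j ∧ U = Ico (ep n (i + 1)) (ep n j) := by
  obtain ⟨hbdd, x, hx, rfl⟩ := hU
  set C := connectedComponentIn (KG n G)ᶜ x with hC
  have hxC : x ∈ C := mem_connectedComponentIn hx
  have hCsub : C ⊆ (KG n G)ᶜ := connectedComponentIn_subset _ _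
  have hpre : IsPreconnected C := isPreconnected_connectedComponentIn
  have hord : C.OrdConnected := hpre.ordConnected
  have hCne : C.Nonempty := ⟨x, hxC⟩
  have bddA : BddAbove C := hbdd.bddAbove
  have bddB : BddBelow C := hbdd.bddBelow
  set p := sInf C with hp
  set q := sSup C with hq
  have hple : ∀ u ∈ C, p ≤ u := fun u hu => csInf_le bddB hu
  have hleq : ∀ u ∈ C, u ≤ q := fun u hu => le_csSup bddA hu
  -- nondegeneracy
  have hpq : p < q := by
    obtain ⟨ε, hε, hfree⟩ := right_free hfin (by simpa using hx)
    have hsub : Ico x (x + ε) ⊆ C := by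
      apply IsPreconnected.subset_connectedComponentIn isPreconnected_Ico
        ⟨le_refl _, by linarith⟩
      intro y hy
      intro hyK
      exact absurd (Set.mem_inter hy hyK) (by rw [hfree]; exact fun h => h)
    have h1 : x + ε / 2 ∈ C := hsub ⟨by linarith, by linarith⟩
    have h2 := hple x hxC
    have h3 := hleq _ h1
    linarith
  have hIoo : Ioo p q ⊆ C := by
    intro t ht
    obtain ⟨u, hu, hut⟩ := exists_lt_of_csInf_lt hCne ht.1
    obtain ⟨v, hv, htv⟩ := exists_lt_of_lt_csSup hCne ht.2
    exact hord.out hu hv ⟨hut.le, htv.le⟩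
  obtain ⟨u₀, hu₀⟩ : (Ioo p q).Nonempty := nonempty_Ioo.2 hpq
  have hCeq : connectedComponentIn (KG n G)ᶜ u₀ = C := (connectedComponentIn_eq (hIoo hu₀)).symm
  have hu₀C : u₀ ∈ C := hIoo hu₀
  -- q ∈ closure K
  have hqcl : q ∈ closure (KG n G) := by
    by_contra hqc
    obtain ⟨ε, hε, hfree⟩ := notMem_closure_free hqc
    have hsub : Ioo p (q + ε) ⊆ C := by
      rw [← hCeq]
      apply IsPreconnected.subset_connectedComponentIn isPreconnected_Ioo
        ⟨hu₀.1, lt_trans hu₀.2 (by linarith)⟩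
      intro t ht
      rcases lt_or_ge t q with h | h
      · exact hCsub (hIoo ⟨ht.1, h⟩)
      · exact fun htK => hfree t ⟨by linarith, ht.2⟩ (subset_closure htK)
    have : q + ε / 2 ∈ C := hsub ⟨by linarith, by linarith⟩
    linarith [hleq _ this]
  rw [closure_KG hfin] at hqcl
  obtain ⟨j, hj, hqj⟩ := mem_iUnion₂.1 hqcl
  have hqej : q = ep n j := by
    rcases eq_or_lt_of_le hqj.1 with h | h
    · exact h.symm
    · exfalso
      obtain ⟨t, ht⟩ : (Ioo (max p (ep n j)) q).Nonempty := nonempty_Ioo.2 (max_lt hpq h)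
      have htC : t ∈ C := hIoo ⟨lt_of_le_of_lt (le_max_left _ _) ht.1, ht.2⟩
      refine hCsub htC (mem_iUnion₂.2 ⟨j, hj, ?_⟩)
      rw [triIco_eq]
      exact ⟨(lt_of_le_of_lt (le_max_right _ _) ht.1).le, lt_of_lt_of_le ht.2 hqj.2⟩
  -- p ∉ K
  have hpK : p ∉ KG n G := by
    intro hpK
    obtain ⟨i, hi, hpi⟩ := mem_iUnion₂.1 hpK
    rw [triIco_eq] at hpi
    obtain ⟨t, ht⟩ : (Ioo p (min q (ep n (i + 1)))).Nonempty :=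
      nonempty_Ioo.2 (lt_min hpq hpi.2)
    have htC : t ∈ C := hIoo ⟨ht.1, lt_of_lt_of_le ht.2 (min_le_left _ _)⟩
    refine hCsub htC (mem_iUnion₂.2 ⟨i, hi, ?_⟩)
    rw [triIco_eq]
    exact ⟨le_trans hpi.1 ht.1.le, lt_of_lt_of_le ht.2 (min_le_right _ _)⟩
  -- p ∈ C
  have hpC : p ∈ C := by
    have hsub : Ico p q ⊆ C := by
      rw [← hCeq]
      apply IsPreconnected.subset_connectedComponentIn isPreconnected_Ico
        ⟨hu₀.1.le, hu₀.2⟩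
      intro t ht
      rcases eq_or_lt_of_le ht.1 with h | h
      · rw [← h]; exact hpK
      · exact hCsub (hIoo ⟨h, ht.2⟩)
    exact hsub ⟨le_refl _, hpq⟩
  -- p ∈ closure K
  have hpcl : p ∈ closure (KG n G) := by
    by_contra hpc
    obtain ⟨ε, hε, hfree⟩ := notMem_closure_free hpc
    have hsub : Ioo (p - ε) q ⊆ C := by
      rw [← hCeq]
      apply IsPreconnected.subset_connectedComponentIn isPreconnected_Ioo
        ⟨by linarith [hu₀.1], hu₀.2⟩
      intro t ht
      rcases le_or_gt t p with h | h
      · exact fun htK => hfree t ⟨ht.1, by linarith⟩ (subset_closure htK)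
      · exact hCsub (hIoo ⟨h, ht.2⟩)
    have : p - ε / 2 ∈ C := hsub ⟨by linarith, by linarith⟩
    linarith [hple _ this]
  rw [closure_KG hfin] at hpcl
  obtain ⟨i, hi, hpi⟩ := mem_iUnion₂.1 hpcl
  have hpei : p = ep n (i + 1) := by
    rcases eq_or_lt_of_le hpi.2 with h | h
    · exact h
    · exact absurd (mem_iUnion₂.2 ⟨i, hi, by rw [triIco_eq]; exact ⟨hpi.1, h⟩⟩) hpK
  -- C = Ico p q
  have hCeq2 : C = Ico p q := by
    apply Subset.antisymm
    · intro u hu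
      refine ⟨hple u hu, lt_of_le_of_ne (hleq u hu) ?_⟩
      intro huq
      apply hCsub hu
      rw [huq, hqej]
      exact mem_iUnion₂.2 ⟨j, hj, left_mem_triIco n j⟩
    · rw [← Ioo_insert_left hpq]
      exact insert_subset hpC hIoo
  refine ⟨i, hi, j, hj, ?_, by rw [hCeq2, hpei, hqej]⟩
  have : ep n (i + 1) < ep n j := by rw [← hpei, ← hqej]; exact hpq
  exact ep_lt_iff.1 this

lemma Egap_subset_EK (hfin : G.Finite) : Egap n G ⊆ EK n G := by
  intro x hx
  obtain ⟨U, hU, hxU⟩ := mem_iUnion₂.1 hx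
  obtain ⟨i, hi, j, hj, hij, rfl⟩ := gap_anatomy hfin hU
  rw [frontier_Ico (ep_lt_ep hij)] at hxU
  rcases hxU with h | h <;> subst h
  · exact mem_iUnion₂.2 ⟨i, hi, by rw [frontier_triIco]; exact Or.inr rfl⟩
  · exact mem_iUnion₂.2 ⟨j, hj, by rw [frontier_triIco]; exact Or.inl rfl⟩

lemma gap_subset (hfin : G.Finite) {U : Set ℝ} (hU : U ∈ gaps (KG n G)) :
    U ⊆ Ioo (ep n (AIdx (G := G))) (ep n (BIdx hfin + 1)) := by
  obtain ⟨i, hi, j, hj, hij, rfl⟩ := gap_anatomy hfin hU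
  intro t ht
  constructor
  · exact lt_of_lt_of_le (ep_lt_ep (Nat.lt_succ_of_le (AIdx_le hi))) ht.1
  · exact lt_of_lt_of_le (lt_of_lt_of_le ht.2 (ep_le_ep (le_BIdx hfin hj)))
      (ep_le_ep (Nat.le_succ _))

lemma Egap_mem_W (hfin : G.Finite) : Egap n G ⊆ WSet n G := by
  intro x hx
  obtain ⟨U, hU, hxU⟩ := mem_iUnion₂.1 hx
  obtain ⟨i, hi, j, hj, hij, rfl⟩ := gap_anatomy hfin hU
  rw [frontier_Ico (ep_lt_ep hij)] at hxU
  rcases hxU with h | h <;> subst h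
  · exact Or.inr (mem_iUnion₂.2 ⟨_, hU, ⟨le_refl _, ep_lt_ep hij⟩⟩)
  · exact Or.inl (mem_iUnion₂.2 ⟨j, hj, left_mem_triIco n j⟩)

lemma Egap_subset_closure (hfin : G.Finite) : Egap n G ⊆ closure (KG n G) :=
  fun _ hx => EK_subset_closure hfin (Egap_subset_EK hfin hx)

/-- every point of the hull not in `K` lies in a gap -/
lemma gaps_cover (hfin : G.Finite) (hne : G.Nonempty) {x : ℝ}
    (hax : ep n (AIdx (G := G)) ≤ x) (hxb : x < ep n (BIdx hfin + 1)) (hx : x ∉ KG n G) :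
    connectedComponentIn (KG n G)ᶜ x ∈ gaps (KG n G) ∧ x ∈ connectedComponentIn (KG n G)ᶜ x := by
  have hxc : x ∈ (KG n G)ᶜ := hx
  set C := connectedComponentIn (KG n G)ᶜ x with hC
  have hxC : x ∈ C := mem_connectedComponentIn hxc
  have hCsub : C ⊆ (KG n G)ᶜ := connectedComponentIn_subset _ _
  have hord : C.OrdConnected := isPreconnected_connectedComponentIn.ordConnected
  have haK : ep n (AIdx (G := G)) ∈ KG n G :=
    mem_iUnion₂.2 ⟨_, AIdx_mem hne, left_mem_triIco n _⟩
  have hBK : ep n (BIdx hfin) ∈ KG n G :=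
    mem_iUnion₂.2 ⟨_, BIdx_mem hfin hne, left_mem_triIco n _⟩
  refine ⟨⟨?_, x, hxc, rfl⟩, hxC⟩
  apply (Metric.isBounded_Icc (ep n (AIdx (G := G))) (ep n (BIdx hfin + 1))).subset
  intro u hu
  constructor
  · by_contra hua
    push_neg at hua
    exact hCsub (hord.out hu hxC ⟨hua.le, hax⟩) haK
  · by_contra hub
    push_neg at hub
    have hxB : x < ep n (BIdx hfin) := by
      by_contra hxB
      push_neg at hxB
      refine hx (mem_iUnion₂.2 ⟨_, BIdx_mem hfin hne, ?_⟩)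
      rw [triIco_eq]
      exact ⟨hxB, hxb⟩
    refine hCsub (hord.out hxC hu ⟨hxB.le, ?_⟩) hBK
    exact le_trans (ep_le_ep (Nat.le_succ _)) hub.le

lemma W_eq (hfin : G.Finite) (hne : G.Nonempty) :
    WSet n G = Ico (ep n (AIdx (G := G))) (ep n (BIdx hfin + 1)) := by
  apply Subset.antisymm
  · rintro x (hx | hx)
    · exact KG_subset hfin hx
    · obtain ⟨U, hU, hxU⟩ := mem_iUnion₂.1 hx
      exact Ioo_subset_Ico_self (gap_subset hfin hU hxU)
  · intro x hx
    by_cases hxK : x ∈ KG n G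
    · exact Or.inl hxK
    · obtain ⟨hg, hm⟩ := gaps_cover hfin hne hx.1 hx.2 hxK
      exact Or.inr (mem_iUnion₂.2 ⟨_, hg, hm⟩)

lemma closure_KG_subset_Icc (hfin : G.Finite) :
    closure (KG n G) ⊆ Icc (ep n (AIdx (G := G))) (ep n (BIdx hfin + 1)) := by
  rw [closure_KG hfin]
  refine iUnion₂_subset fun i hi => Icc_subset_Icc (ep_le_ep (AIdx_le hi))
    (ep_le_ep (Nat.succ_le_succ (le_BIdx hfin hi)))

lemma component_reaches_Egap (hfin : G.Finite) (hne : G.Nonempty)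
    (hgaps : (gaps (KG n G)).Nonempty) {e : ℝ} (he : e ∈ closure (KG n G)) :
    ∃ g ∈ Egap n G, g ∈ connectedComponentIn (closure (KG n G)) e := by
  set a := ep n (AIdx (G := G)) with ha
  set b := ep n (BIdx hfin + 1) with hb
  set L := closure (KG n G) with hL
  set T := connectedComponentIn L e with hT
  have heT : e ∈ T := mem_connectedComponentIn he
  have hTsub : T ⊆ L := connectedComponentIn_subset _ _
  have hpre : IsPreconnected T := isPreconnected_connectedComponentIn
  have hord : T.OrdConnected := hpre.ordConnected
  have hLIcc : L ⊆ Icc a b := closure_KG_subset_Icc hfin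
  have hTclosed : IsClosed T := by
    apply isClosed_of_closure_subset
    apply IsPreconnected.subset_connectedComponentIn hpre.closure (subset_closure heT)
    calc closure T ⊆ closure L := closure_mono hTsub
    _ = L := isClosed_closure.closure_eq
  have hTne : T.Nonempty := ⟨e, heT⟩
  have hbddA : BddAbove T := (Metric.isBounded_Icc a b).subset (hTsub.trans hLIcc) |>.bddAbove
  have hbddB : BddBelow T := (Metric.isBounded_Icc a b).subset (hTsub.trans hLIcc) |>.bddBelow
  set α := sInf T with hα
  set β := sSup T with hβ
  have hαT : α ∈ T := hTclosed.csInf_mem hTne hbddB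
  have hβT : β ∈ T := hTclosed.csSup_mem hTne hbddA
  have hleβ : ∀ u ∈ T, u ≤ β := fun u hu => le_csSup hbddA hu
  have hαle : ∀ u ∈ T, α ≤ u := fun u hu => csInf_le hbddB hu
  clear_value α β
  -- absorbing closed grid intervals touching T
  have hIccsub : ∀ {i : ℕ}, i ∈ G → ∀ {t : ℝ}, t ∈ T →
      t ∈ Icc (ep n i) (ep n (i + 1)) → Icc (ep n i) (ep n (i + 1)) ⊆ T := by
    intro i hi t htT hti
    have hunion : IsPreconnected (Icc (ep n i) (ep n (i + 1)) ∪ T) :=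
      isPreconnected_Icc.union t hti htT hpre
    have hsubL : Icc (ep n i) (ep n (i + 1)) ∪ T ⊆ L := by
      apply union_subset _ hTsub
      rw [hL, closure_KG hfin]
      exact subset_iUnion₂_of_subset i hi (le_refl _)
    have := hunion.subset_connectedComponentIn (Or.inr heT) hsubL
    exact (subset_union_left).trans this
  have hstep : (0:ℝ) < 1 / 3 ^ n := by positivity
  rcases lt_or_eq_of_le ((hLIcc (hTsub hβT)).2) with hβb | hβb
  · -- β < b : find a gap just to the right of β
    obtain ⟨i, hi, hβi⟩ := mem_iUnion₂.1 (by rw [hL, closure_KG hfin] at hTsub; exact hTsub hβT)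
    have hIccT := hIccsub hi hβT hβi
    have hβeq : β = ep n (i + 1) :=
      le_antisymm hβi.2 (hleβ _ (hIccT ⟨(ep_lt_succ n i).le, le_refl _⟩))
    have hfreeR : ∀ t ∈ Ioo β (β + 1 / 3 ^ n), t ∉ L := by
      intro t ht htL
      rw [hL, closure_KG hfin] at htL
      obtain ⟨l, hl, htl⟩ := mem_iUnion₂.1 htL
      rcases le_or_gt (ep n l) β with h | h
      · have hβl : β ∈ Icc (ep n l) (ep n (l + 1)) := ⟨h, le_trans ht.1.le htl.2⟩
        have := hleβ _ (hIccsub hl hβT hβl ⟨(ep_lt_succ n l).le, le_refl _⟩)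
        linarith [htl.2, ht.1]
      · have hli : i + 1 < l := by rw [hβeq] at h; exact ep_lt_iff.1 h
        have : ep n (i + 2) ≤ ep n l := ep_le_ep hli
        have h2 : ep n (i + 2) = β + 1 / 3 ^ n := by rw [hβeq, ep_succ]
        linarith [htl.1, ht.2]
    set x₀ := β + min (1 / 3 ^ n) (b - β) / 2 with hx₀
    have hmpos : 0 < min (1 / 3 ^ n) (b - β) := lt_min hstep (by linarith)
    have hx₀1 : β < x₀ := by rw [hx₀]; linarith
    have hx₀2 : x₀ < β + 1 / 3 ^ n := by
      have := min_le_left (1 / 3 ^ n) (b - β); rw [hx₀]; linarith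
    have hx₀3 : x₀ < b := by
      have := min_le_right (1 / 3 ^ n) (b - β); rw [hx₀]; linarith
    have hx₀a : a ≤ x₀ := le_trans (hLIcc (hTsub hβT)).1 hx₀1.le
    have hx₀K : x₀ ∉ KG n G := fun h => hfreeR x₀ ⟨hx₀1, hx₀2⟩ (subset_closure h)
    obtain ⟨hUgap, hx₀U⟩ := gaps_cover hfin hne hx₀a hx₀3 hx₀K
    obtain ⟨i', hi', j', hj', hij', hUeq⟩ := gap_anatomy hfin hUgap
    rw [hUeq] at hx₀U
    have hpx₀ : ep n (i' + 1) ≤ x₀ := hx₀U.1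
    have hpL : ep n (i' + 1) ∈ L := by
      rw [hL, closure_KG hfin]
      exact mem_iUnion₂.2 ⟨i', hi', ⟨(ep_lt_succ n i').le, le_refl _⟩⟩
    have hpβ : ep n (i' + 1) ≤ β := by
      by_contra hc
      push_neg at hc
      exact hfreeR _ ⟨hc, lt_of_le_of_lt hpx₀ hx₀2⟩ hpL
    have hpeq : ep n (i' + 1) = β := by
      by_contra hne'
      have hplt : ep n (i' + 1) < β := lt_of_le_of_ne hpβ hne'
      set t := max (ep n i) ((ep n (i' + 1) + β) / 2) with htdef
      have ht1 : t < β := by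
        apply max_lt
        · rw [hβeq]; exact ep_lt_succ n i
        · linarith
      have htK : t ∈ KG n G := by
        refine mem_iUnion₂.2 ⟨i, hi, ?_⟩
        rw [triIco_eq]
        exact ⟨le_max_left _ _, by rw [← hβeq]; exact ht1⟩
      have htU : t ∈ Ico (ep n (i' + 1)) (ep n j') := by
        constructor
        · exact le_trans (by linarith) (le_max_right _ _)
        · exact lt_trans (lt_trans ht1 hx₀1) hx₀U.2
      rw [← hUeq] at htU
      exact (connectedComponentIn_subset _ _) htU htK
    refine ⟨β, ?_, hβT⟩
    refine mem_iUnion₂.2 ⟨_, hUgap, ?_⟩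
    rw [hUeq, frontier_Ico (ep_lt_ep hij'), ← hpeq]
    exact Or.inl rfl
  · rcases lt_or_eq_of_le ((hLIcc (hTsub hαT)).1) with hαa | hαa
    · -- a < α : find a gap just to the left of α
      obtain ⟨i, hi, hαi⟩ := mem_iUnion₂.1 (by rw [hL, closure_KG hfin] at hTsub; exact hTsub hαT)
      have hIccT := hIccsub hi hαT hαi
      have hαeq : α = ep n i :=
        le_antisymm (hαle _ (hIccT ⟨le_refl _, (ep_lt_succ n i).le⟩)) hαi.1
      have hipos : ∀ {l : ℕ}, l ∈ G → ep n (l + 1) < α → 1 ≤ i := by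
        intro l hl h
        have := ep_lt_iff.1 (by rw [hαeq] at h; exact h)
        omega
      have hfreeL : ∀ t ∈ Ioo (α - 1 / 3 ^ n) α, t ∉ L := by
        intro t ht htL
        rw [hL, closure_KG hfin] at htL
        obtain ⟨l, hl, htl⟩ := mem_iUnion₂.1 htL
        rcases le_or_gt α (ep n (l + 1)) with h | h
        · have hαl : α ∈ Icc (ep n l) (ep n (l + 1)) := ⟨le_trans htl.1 ht.2.le, h⟩
          have := hαle _ (hIccsub hl hαT hαl ⟨le_refl _, (ep_lt_succ n l).le⟩)
          exact absurd (lt_of_le_of_lt (le_trans this htl.1) ht.2) (lt_irrefl _)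
        · have h1 : 1 ≤ i := hipos hl h
          have hli : l + 1 < i := by rw [hαeq] at h; exact ep_lt_iff.1 h
          have h2 : ep n (l + 1) ≤ ep n (i - 1) := ep_le_ep (by omega)
          have hi1 : i - 1 + 1 = i := by omega
          have h3 : ep n i = ep n (i - 1) + 1 / 3 ^ n := by
            conv_lhs => rw [← hi1]
            exact ep_succ
          linarith [htl.2, ht.1]
      set x₀ := α - min (1 / 3 ^ n) (α - a) / 2 with hx₀
      have hmpos : 0 < min (1 / 3 ^ n) (α - a) := lt_min hstep (by linarith)
      have hx₀1 : x₀ < α := by rw [hx₀]; linarith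
      have hx₀2 : α - 1 / 3 ^ n < x₀ := by
        have := min_le_left (1 / 3 ^ n) (α - a); rw [hx₀]; linarith
      have hx₀a : a ≤ x₀ := by
        have := min_le_right (1 / 3 ^ n) (α - a); rw [hx₀]; linarith
      have hx₀3 : x₀ < b := lt_of_lt_of_le hx₀1 (hLIcc (hTsub hαT)).2
      have hx₀K : x₀ ∉ KG n G := fun h => hfreeL x₀ ⟨hx₀2, hx₀1⟩ (subset_closure h)
      obtain ⟨hUgap, hx₀U⟩ := gaps_cover hfin hne hx₀a hx₀3 hx₀K
      obtain ⟨i', hi', j', hj', hij', hUeq⟩ := gap_anatomy hfin hUgap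
      rw [hUeq] at hx₀U
      have hqL : ep n j' ∈ KG n G := mem_iUnion₂.2 ⟨j', hj', left_mem_triIco n j'⟩
      have hqα : α ≤ ep n j' := by
        by_contra hc
        push_neg at hc
        exact hfreeL _ ⟨lt_of_lt_of_le hx₀2 (le_of_lt hx₀U.2), hc⟩ (subset_closure hqL)
      have hqeq : ep n j' = α := by
        by_contra hne'
        have hqlt : α < ep n j' := lt_of_le_of_ne hqα (fun h => hne' h.symm)
        have hαU : α ∈ Ico (ep n (i' + 1)) (ep n j') := ⟨le_trans hx₀U.1 hx₀1.le, hqlt⟩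
        rw [← hUeq] at hαU
        apply (connectedComponentIn_subset _ _) hαU
        rw [hαeq]
        exact mem_iUnion₂.2 ⟨i, hi, left_mem_triIco n i⟩
      refine ⟨α, ?_, hαT⟩
      refine mem_iUnion₂.2 ⟨_, hUgap, ?_⟩
      rw [hUeq, frontier_Ico (ep_lt_ep hij'), ← hqeq]
      exact Or.inr rfl
    · -- T = Icc a b : any gap endpoint works
      have hIccsubT : Icc a b ⊆ T := by
        intro t ht
        exact hord.out hαT hβT ⟨by rw [← hαa]; exact ht.1, by rw [hβb]; exact ht.2⟩
      obtain ⟨U, hU⟩ := hgaps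
      obtain ⟨i', hi', j', hj', hij', hUeq⟩ := gap_anatomy hfin hU
      have hpU : ep n (i' + 1) ∈ U := by rw [hUeq]; exact ⟨le_refl _, ep_lt_ep hij'⟩
      have hpT : ep n (i' + 1) ∈ T := hIccsubT (Ioo_subset_Icc_self (gap_subset hfin hU hpU))
      refine ⟨ep n (i' + 1), ?_, hpT⟩
      refine mem_iUnion₂.2 ⟨U, hU, ?_⟩
      rw [hUeq, frontier_Ico (ep_lt_ep hij')]
      exact Or.inl rfl

/-! ### d-dimensional machinery -/

/-- connectivity relation within `s` -/
def R {X : Type*} [TopologicalSpace X] (s : Set X) (x y : X) : Prop :=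
  ∃ t, t ⊆ s ∧ IsPreconnected t ∧ x ∈ t ∧ y ∈ t

lemma R.trans {X : Type*} [TopologicalSpace X] {s : Set X} {x w y : X}
    (h1 : R s x w) (h2 : R s w y) : R s x y := by
  obtain ⟨t1, ht1, hp1, hx, hw1⟩ := h1
  obtain ⟨t2, ht2, hp2, hw2, hy⟩ := h2
  exact ⟨t1 ∪ t2, union_subset ht1 ht2, hp1.union w hw1 hw2 hp2, Or.inl hx, Or.inr hy⟩

lemma R.mono {X : Type*} [TopologicalSpace X] {s s' : Set X} {x y : X}
    (h : R s x y) (hss : s ⊆ s') : R s' x y := by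
  obtain ⟨t, ht, hp, hx, hy⟩ := h
  exact ⟨t, ht.trans hss, hp, hx, hy⟩

lemma continuous_update {d : ℕ} (x : Fin d → ℝ) (m : Fin d) :
    Continuous fun t : ℝ => Function.update x m t := by fun_prop

lemma seg_R {d : ℕ} {s : Set (Fin d → ℝ)} (x : Fin d → ℝ) (m : Fin d) {T : Set ℝ}
    (hT : IsPreconnected T) (hsub : ∀ t ∈ T, Function.update x m t ∈ s) {u v : ℝ}
    (hu : u ∈ T) (hv : v ∈ T) : R s (Function.update x m u) (Function.update x m v) := by
  refine ⟨(fun t => Function.update x m t) '' T, ?_, hT.image _ (continuous_update x m).continuousOn,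
    ⟨u, hu, rfl⟩, ⟨v, hv, rfl⟩⟩
  rintro _ ⟨t, ht, rfl⟩
  exact hsub t ht

lemma grid_connect {d : ℕ} {s s₀ : Set (Fin d → ℝ)} (hss : s₀ ⊆ s) (z : Fin d → ℝ)
    (hupd : ∀ x ∈ s₀, ∀ m, ∃ T : Set ℝ, IsPreconnected T ∧ x m ∈ T ∧ z m ∈ T ∧
      (∀ t ∈ T, Function.update x m t ∈ s) ∧ Function.update x m (z m) ∈ s₀) :
    ∀ x ∈ s₀, R s x z := by
  classical
  suffices H : ∀ N : ℕ, ∀ x ∈ s₀, (Finset.univ.filter fun m => x m ≠ z m).card ≤ N → R s x z from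
    fun x hx => H _ x hx le_rfl
  intro N
  induction N with
  | zero =>
    intro x hx hcard
    have : x = z := by
      funext m
      by_contra hm
      have : m ∈ Finset.univ.filter fun m => x m ≠ z m := by simp [hm]
      rw [Finset.card_eq_zero.1 (Nat.le_zero.1 hcard)] at this
      exact absurd this (Finset.notMem_empty m)
    subst this
    exact ⟨{x}, singleton_subset_iff.2 (hss hx), isPreconnected_singleton, rfl, rfl⟩
  | succ N ih =>
    intro x hx hcard
    by_cases hxz : x = z
    · subst hxz
      exact ⟨{x}, singleton_subset_iff.2 (hss hx), isPreconnected_singleton, rfl, rfl⟩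
    · obtain ⟨m, hm⟩ := Function.ne_iff.1 hxz
      obtain ⟨T, hT, hxT, hzT, hTs, hx's₀⟩ := hupd x hx m
      have hseg : R s x (Function.update x m (z m)) := by
        have := seg_R x m hT hTs hxT hzT
        rwa [Function.update_eq_self] at this
      refine hseg.trans (ih _ hx's₀ ?_)
      have hsub2 : (Finset.univ.filter fun l => Function.update x m (z m) l ≠ z l) ⊆
          (Finset.univ.filter fun l => x l ≠ z l).erase m := by
        intro l hl
        rw [Finset.mem_filter] at hl
        have hlm : l ≠ m := by
          intro h
          subst h
          rw [Function.update_self] at hl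
          exact hl.2 rfl
        rw [Function.update_of_ne hlm] at hl
        exact Finset.mem_erase.2 ⟨hlm, by simp [hl.2]⟩
      have hmem : m ∈ Finset.univ.filter fun l => x l ≠ z l := by simp [hm]
      calc (Finset.univ.filter fun l => Function.update x m (z m) l ≠ z l).card
          ≤ ((Finset.univ.filter fun l => x l ≠ z l).erase m).card := Finset.card_le_card hsub2
        _ = (Finset.univ.filter fun l => x l ≠ z l).card - 1 := Finset.card_erase_of_mem hmem
        _ ≤ N := by omega

lemma mem_Sk_iff {d : ℕ} {I : Fin d → Set ℝ} {x : Fin d → ℝ} :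
    x ∈ Sk d I ↔ ∃ j, ∀ m, x m ∈ (if m = j then I m else frontier (I m)) := by
  simp [Sk, Set.mem_pi]

lemma mem_goodPart {d n : ℕ} {G : Set ℕ} {x : Fin d → ℝ} :
    (x ∈ ⋃ f ∈ {f : Fin d → ℕ | ∀ j, f j ∈ G}, Sk d fun j => triIco n (f j)) ↔
      ∃ j, x j ∈ KG n G ∧ ∀ m, m ≠ j → x m ∈ EK n G := by
  classical
  constructor
  · intro hx
    obtain ⟨f, hf, hxf⟩ := mem_iUnion₂.1 hx
    obtain ⟨j, hj⟩ := mem_Sk_iff.1 hxf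
    refine ⟨j, ?_, fun m hm => ?_⟩
    · have := hj j
      rw [if_pos rfl] at this
      exact mem_iUnion₂.2 ⟨f j, hf j, this⟩
    · have := hj m
      rw [if_neg hm] at this
      exact mem_iUnion₂.2 ⟨f m, hf m, this⟩
  · rintro ⟨j, hxj, hxm⟩
    have hKm : ∀ m, ∃ i, i ∈ G ∧ x m ∈ (if m = j then triIco n i else frontier (triIco n i)) := by
      intro m
      by_cases hm : m = j
      · subst hm
        obtain ⟨i, hi, hxi⟩ := mem_iUnion₂.1 hxj
        exact ⟨i, hi, by rw [if_pos rfl]; exact hxi⟩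
      · obtain ⟨i, hi, hxi⟩ := mem_iUnion₂.1 (hxm m hm)
        exact ⟨i, hi, by rw [if_neg hm]; exact hxi⟩
    choose f hfG hfx using hKm
    exact mem_iUnion₂.2 ⟨f, hfG, mem_Sk_iff.2 ⟨j, hfx⟩⟩

lemma mem_gapPart {d n : ℕ} {G : Set ℕ} {x : Fin d → ℝ} :
    (x ∈ ⋃ I ∈ {I : Fin d → Set ℝ | ∀ j, I j ∈ gaps (KG n G)}, Sk d I) ↔
      ∃ j, x j ∈ GapU n G ∧ ∀ m, m ≠ j → x m ∈ Egap n G := by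
  classical
  constructor
  · intro hx
    obtain ⟨I, hI, hxI⟩ := mem_iUnion₂.1 hx
    obtain ⟨j, hj⟩ := mem_Sk_iff.1 hxI
    refine ⟨j, ?_, fun m hm => ?_⟩
    · have := hj j
      rw [if_pos rfl] at this
      exact mem_iUnion₂.2 ⟨I j, hI j, this⟩
    · have := hj m
      rw [if_neg hm] at this
      exact mem_iUnion₂.2 ⟨I m, hI m, this⟩
  · rintro ⟨j, hxj, hxm⟩
    have hKm : ∀ m, ∃ U, U ∈ gaps (KG n G) ∧
        x m ∈ (if m = j then U else frontier U) := by
      intro m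
      by_cases hm : m = j
      · subst hm
        obtain ⟨U, hU, hxU⟩ := mem_iUnion₂.1 hxj
        exact ⟨U, hU, by rw [if_pos rfl]; exact hxU⟩
      · obtain ⟨U, hU, hxU⟩ := mem_iUnion₂.1 (hxm m hm)
        exact ⟨U, hU, by rw [if_neg hm]; exact hxU⟩
    choose I hIG hIx using hKm
    exact mem_iUnion₂.2 ⟨I, hIG, mem_Sk_iff.2 ⟨j, hIx⟩⟩

lemma isPreconnected_uIcc' {x y : ℝ} : IsPreconnected (uIcc x y) := isPreconnected_uIcc

theorem gamma_general (d : ℕ) (hd : 0 < d) (n : ℕ) (G : Set ℕ) (hfin : G.Finite)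
    (hne : G.Nonempty) :
    IsConnected ((⋃ f ∈ {f : Fin d → ℕ | ∀ j, f j ∈ G}, Sk d fun j => triIco n (f j)) ∪
      ⋃ I ∈ {I : Fin d → Set ℝ | ∀ j, I j ∈ gaps (KG n G)}, Sk d I) := by
  classical
  set Γ := ((⋃ f ∈ {f : Fin d → ℕ | ∀ j, f j ∈ G}, Sk d fun j => triIco n (f j)) ∪
      ⋃ I ∈ {I : Fin d → Set ℝ | ∀ j, I j ∈ gaps (KG n G)}, Sk d I) with hΓdef
  have hmem : ∀ x : Fin d → ℝ, x ∈ Γ ↔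
      ((∃ j, x j ∈ KG n G ∧ ∀ m, m ≠ j → x m ∈ EK n G) ∨
        (∃ j, x j ∈ GapU n G ∧ ∀ m, m ≠ j → x m ∈ Egap n G)) := by
    intro x
    rw [hΓdef, mem_union]
    exact or_congr mem_goodPart mem_gapPart
  set j0 : Fin d := ⟨0, hd⟩ with hj0
  set a := ep n (AIdx (G := G)) with hadef
  set b := ep n (BIdx hfin + 1) with hbdef
  have haK : a ∈ KG n G := mem_iUnion₂.2 ⟨_, AIdx_mem hne, left_mem_triIco n _⟩
  have haEK : a ∈ EK n G :=
    mem_iUnion₂.2 ⟨_, AIdx_mem hne, by rw [frontier_triIco]; exact Or.inl rfl⟩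
  have hepiK : ∀ {i : ℕ}, i ∈ G → ep n i ∈ KG n G :=
    fun {i} hi => mem_iUnion₂.2 ⟨i, hi, left_mem_triIco n i⟩
  have hepiEK : ∀ {i : ℕ}, i ∈ G → ep n i ∈ EK n G :=
    fun {i} hi => mem_iUnion₂.2 ⟨i, hi, by rw [frontier_triIco]; exact Or.inl rfl⟩
  by_cases hgaps : (gaps (KG n G)).Nonempty
  · -- there is at least one gap
    obtain ⟨U₀, hU₀⟩ := hgaps
    obtain ⟨i₀, hi₀, j₀', hj₀', hij₀, hU₀eq⟩ := gap_anatomy hfin hU₀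
    set p₀ := ep n (i₀ + 1) with hp₀def
    have hp₀Egap : p₀ ∈ Egap n G := by
      refine mem_iUnion₂.2 ⟨U₀, hU₀, ?_⟩
      rw [hU₀eq, frontier_Ico (ep_lt_ep hij₀)]
      exact Or.inl rfl
    set z : Fin d → ℝ := fun _ => p₀ with hzdef
    set Γ' : Set (Fin d → ℝ) :=
      {x | ∃ j, x j ∈ WSet n G ∧ ∀ m, m ≠ j → x m ∈ Egap n G} with hΓ'def
    have hΓ'Γ : Γ' ⊆ Γ := by
      rintro x ⟨j, hw, hm⟩
      rw [hmem]
      rcases hw with h | h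
      · exact Or.inl ⟨j, h, fun m hm' => Egap_subset_EK hfin (hm m hm')⟩
      · exact Or.inr ⟨j, h, hm⟩
    have hWIco : WSet n G = Ico a b := W_eq hfin hne
    have hWord : (WSet n G).OrdConnected := by rw [hWIco]; exact ordConnected_Ico
    set s₀' : Set (Fin d → ℝ) := {x | ∀ l, x l ∈ Egap n G} with hs₀'def
    have hz0 : z ∈ s₀' := fun _ => hp₀Egap
    have hs₀Γ' : s₀' ⊆ Γ' :=
      fun x hx => ⟨j0, Egap_mem_W hfin (hx j0), fun m _ => hx m⟩
    have hconn0 : ∀ x ∈ s₀', R Γ x z := by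
      apply grid_connect (hs₀Γ'.trans hΓ'Γ) z
      intro x hx m
      refine ⟨uIcc (x m) p₀, isPreconnected_uIcc', left_mem_uIcc, right_mem_uIcc, ?_, ?_⟩
      · intro t ht
        apply hΓ'Γ
        refine ⟨m, ?_, fun l hl => ?_⟩
        · rw [Function.update_self]
          exact hWord.uIcc_subset (Egap_mem_W hfin (hx m)) (Egap_mem_W hfin hp₀Egap) ht
        · rw [Function.update_of_ne hl]
          exact hx l
      · intro l
        by_cases hl : l = m
        · subst hl; rw [Function.update_self]; exact hp₀Egap
        · rw [Function.update_of_ne hl]; exact hx l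
    have hzΓ : z ∈ Γ := hΓ'Γ (hs₀Γ' hz0)
    have hmain : ∀ y ∈ Γ, R Γ y z := by
      intro y hy
      rw [hmem] at hy
      rcases hy with ⟨j, hyj, hym⟩ | ⟨j, hyj, hym⟩
      · -- good slab
        obtain ⟨i, hi, hyi⟩ := mem_iUnion₂.1 hyj
        have htriPre : IsPreconnected (triIco n i) := by rw [triIco_eq]; exact isPreconnected_Ico
        have hseg1 : R Γ y (Function.update y j (ep n i)) := by
          have := seg_R (s := Γ) y j htriPre ?_ hyi (left_mem_triIco n i)
          · rwa [Function.update_eq_self] at this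
          · intro t ht
            rw [hmem]
            refine Or.inl ⟨j, ?_, fun m hm => ?_⟩
            · rw [Function.update_self]; exact mem_iUnion₂.2 ⟨i, hi, ht⟩
            · rw [Function.update_of_ne hm]; exact hym m hm
        set y' := Function.update y j (ep n i) with hy'def
        have hy'EK : ∀ l, y' l ∈ EK n G := by
          intro l
          by_cases hl : l = j
          · subst hl; rw [hy'def, Function.update_self]; exact hepiEK hi
          · rw [hy'def, Function.update_of_ne hl]; exact hym l hl
        have hy'j : y' j = ep n i := Function.update_self j _ y
        have hchoice : ∀ l, ∃ g, g ∈ Egap n G ∧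
            g ∈ connectedComponentIn (closure (KG n G)) (y' l) :=
          fun l => component_reaches_Egap hfin hne ⟨U₀, hU₀⟩ (EK_subset_closure hfin (hy'EK l))
        choose gv hgEgap hgcomp using hchoice
        set zv : Fin d → ℝ := fun l => if l = j then ep n i else gv l with hzvdef
        have hzvj : zv j = ep n i := by rw [hzvdef]; simp
        have hzvEK : ∀ l, zv l ∈ EK n G := by
          intro l
          rw [hzvdef]
          by_cases hl : l = j
          · simp only [hl, if_pos rfl]; exact hepiEK hi
          · simp only [if_neg hl]; exact Egap_subset_EK hfin (hgEgap l)
        set s₀'' : Set (Fin d → ℝ) := {x | ∀ l, x l = y' l ∨ x l = zv l} with hs₀''def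
        have hxlEK : ∀ x ∈ s₀'', ∀ l, x l ∈ EK n G := by
          intro x hx l
          rcases hx l with h | h
          · rw [h]; exact hy'EK l
          · rw [h]; exact hzvEK l
        have hxj : ∀ x ∈ s₀'', x j = ep n i := by
          intro x hx
          rcases hx j with h | h
          · rw [h, hy'j]
          · rw [h, hzvj]
        have hs₀''Γ : s₀'' ⊆ Γ := by
          intro x hx
          rw [hmem]
          exact Or.inl ⟨j, by rw [hxj x hx]; exact hepiK hi, fun m hm => hxlEK x hx m⟩
        have hR2 : R Γ y' zv := by
          apply grid_connect hs₀''Γ zv _ y' (fun l => Or.inl rfl)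
          intro x hx m
          by_cases hmj : m = j
          · subst hmj
            refine ⟨{ep n i}, isPreconnected_singleton, mem_singleton_iff.2 (hxj x hx),
              mem_singleton_iff.2 hzvj, ?_, ?_⟩
            · rintro t rfl
              rw [hmem]
              refine Or.inl ⟨m, ?_, fun l hl => ?_⟩
              · rw [Function.update_self]; exact hepiK hi
              · rw [Function.update_of_ne hl]; exact hxlEK x hx l
            · intro l
              by_cases hl : l = m
              · subst hl; rw [Function.update_self]; exact Or.inr rfl
              · rw [Function.update_of_ne hl]; exact hx l
          · refine ⟨connectedComponentIn (closure (KG n G)) (y' m),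
              isPreconnected_connectedComponentIn, ?_, ?_, ?_, ?_⟩
            · rcases hx m with h | h
              · rw [h]; exact mem_connectedComponentIn (EK_subset_closure hfin (hy'EK m))
              · rw [h, hzvdef]; simp only [if_neg hmj]; exact hgcomp m
            · rw [hzvdef]; simp only [if_neg hmj]; exact hgcomp m
            · intro t ht
              have htcl : t ∈ closure (KG n G) := connectedComponentIn_subset _ _ ht
              rw [hmem]
              rcases closure_KG_sub hfin htcl with htK | htEK
              · refine Or.inl ⟨m, ?_, fun l hl => ?_⟩
                · rw [Function.update_self]; exact htK
                · rw [Function.update_of_ne hl]; exact hxlEK x hx l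
              · refine Or.inl ⟨j, ?_, fun l hl => ?_⟩
                · rw [Function.update_of_ne (fun h => hmj h.symm), hxj x hx]
                  exact hepiK hi
                · by_cases hlm : l = m
                  · subst hlm; rw [Function.update_self]; exact htEK
                  · rw [Function.update_of_ne hlm]; exact hxlEK x hx l
            · intro l
              by_cases hl : l = m
              · subst hl; rw [Function.update_self]; exact Or.inr rfl
              · rw [Function.update_of_ne hl]; exact hx l
        have hseg3 : R Γ zv (Function.update zv j p₀) := by
          have := seg_R (s := Γ) zv j isPreconnected_uIcc' ?_
            (left_mem_uIcc (a := ep n i) (b := p₀)) right_mem_uIcc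
          · rwa [← hzvj, Function.update_eq_self] at this
          · intro t ht
            apply hΓ'Γ
            refine ⟨j, ?_, fun m hm => ?_⟩
            · rw [Function.update_self]
              exact hWord.uIcc_subset (Or.inl (hepiK hi)) (Egap_mem_W hfin hp₀Egap) ht
            · rw [Function.update_of_ne hm, hzvdef]
              simp only [if_neg hm]
              exact hgEgap m
        have hw : Function.update zv j p₀ ∈ s₀' := by
          intro l
          by_cases hl : l = j
          · subst hl; rw [Function.update_self]; exact hp₀Egap
          · rw [Function.update_of_ne hl, hzvdef]; simp only [if_neg hl]; exact hgEgap l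
        exact ((hseg1.trans hR2).trans hseg3).trans (hconn0 _ hw)
      · -- gap slab
        have hseg : R Γ y (Function.update y j p₀) := by
          have := seg_R (s := Γ) y j isPreconnected_uIcc' ?_
            (left_mem_uIcc (a := y j) (b := p₀)) right_mem_uIcc
          · rwa [Function.update_eq_self] at this
          · intro t ht
            apply hΓ'Γ
            refine ⟨j, ?_, fun m hm => ?_⟩
            · rw [Function.update_self]
              exact hWord.uIcc_subset (Or.inr hyj) (Egap_mem_W hfin hp₀Egap) ht
            · rw [Function.update_of_ne hm]; exact hym m hm
        have hw : Function.update y j p₀ ∈ s₀' := by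
          intro l
          by_cases hl : l = j
          · subst hl; rw [Function.update_self]; exact hp₀Egap
          · rw [Function.update_of_ne hl]; exact hym l hl
        exact hseg.trans (hconn0 _ hw)
    refine ⟨⟨z, hzΓ⟩, isPreconnected_of_forall z fun y hy => ?_⟩
    obtain ⟨t, hts, htp, hyt, hzt⟩ := hmain y hy
    exact ⟨t, hts, hzt, hyt, htp⟩
  · -- no gaps : K is a full interval
    have hgapU : GapU n G = ∅ := by
      rw [Set.not_nonempty_iff_eq_empty] at hgaps
      rw [GapU, hgaps]
      simp
    have hKIco : KG n G = Ico a b := by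
      have hW : KG n G ∪ GapU n G = Ico a b := W_eq hfin hne
      rwa [hgapU, union_empty] at hW
    set z : Fin d → ℝ := fun _ => a with hzdef
    have hzΓ : z ∈ Γ := by
      rw [hmem]
      exact Or.inl ⟨j0, haK, fun m _ => haEK⟩
    set s₀ : Set (Fin d → ℝ) := {x | x ∈ Γ ∧ ∀ l, x l ∈ EK n G ∪ {a}} with hs₀def
    have hclosT : ∀ {u : ℝ}, u ∈ EK n G ∪ {a} → u ∈ closure (KG n G) := by
      rintro u (hu | hu)
      · exact EK_subset_closure hfin hu
      · rw [hu]; exact subset_closure haK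
    have hconn0 : ∀ x ∈ s₀, R Γ x z := by
      apply grid_connect (fun x hx => hx.1) z
      intro x hx m
      refine ⟨KG n G ∪ {x m}, ?_, Or.inr rfl, Or.inl haK, ?_, ?_⟩
      · apply IsPreconnected.subset_closure (s := KG n G)
        · rw [hKIco]; exact isPreconnected_Ico
        · exact subset_union_left
        · exact union_subset subset_closure (singleton_subset_iff.2 (hclosT (hx.2 m)))
      · rintro t (htK | ht)
        · rw [hmem]
          refine Or.inl ⟨m, ?_, fun l hl => ?_⟩
          · rw [Function.update_self]; exact htK
          · rw [Function.update_of_ne hl]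
            rcases hx.2 l with h | h
            · exact h
            · rw [h]; exact haEK
        · rw [mem_singleton_iff] at ht
          rw [ht, Function.update_eq_self]
          exact hx.1
      · constructor
        · rw [hmem]
          refine Or.inl ⟨m, ?_, fun l hl => ?_⟩
          · rw [Function.update_self]; exact haK
          · rw [Function.update_of_ne hl]
            rcases hx.2 l with h | h
            · exact h
            · rw [h]; exact haEK
        · intro l
          by_cases hl : l = m
          · subst hl; rw [Function.update_self]; exact Or.inr rfl
          · rw [Function.update_of_ne hl]; exact hx.2 l
    have hmain : ∀ y ∈ Γ, R Γ y z := by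
      intro y hy
      rw [hmem] at hy
      rcases hy with ⟨j, hyj, hym⟩ | ⟨j, hyj, hym⟩
      · obtain ⟨i, hi, hyi⟩ := mem_iUnion₂.1 hyj
        have htriPre : IsPreconnected (triIco n i) := by rw [triIco_eq]; exact isPreconnected_Ico
        have hseg1 : R Γ y (Function.update y j (ep n i)) := by
          have := seg_R (s := Γ) y j htriPre ?_ hyi (left_mem_triIco n i)
          · rwa [Function.update_eq_self] at this
          · intro t ht
            rw [hmem]
            refine Or.inl ⟨j, ?_, fun m hm => ?_⟩
            · rw [Function.update_self]; exact mem_iUnion₂.2 ⟨i, hi, ht⟩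
            · rw [Function.update_of_ne hm]; exact hym m hm
        have hy's₀ : Function.update y j (ep n i) ∈ s₀ := by
          constructor
          · rw [hmem]
            refine Or.inl ⟨j, ?_, fun m hm => ?_⟩
            · rw [Function.update_self]; exact hepiK hi
            · rw [Function.update_of_ne hm]; exact hym m hm
          · intro l
            by_cases hl : l = j
            · subst hl; rw [Function.update_self]; exact Or.inl (hepiEK hi)
            · rw [Function.update_of_ne hl]; exact Or.inl (hym l hl)
        exact hseg1.trans (hconn0 _ hy's₀)
      · exfalso
        rw [hgapU] at hyj
        exact hyj
    refine ⟨⟨z, hzΓ⟩, isPreconnected_of_forall z fun y hy => ?_⟩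
    obtain ⟨t, hts, htp, hyt, hzt⟩ := hmain y hy
    exact ⟨t, hts, hzt, hyt, htp⟩


lemma istar_odd (n : ℕ) : ∃ t, 3 ^ n = 2 * t + 1 := by
  have h : Odd ((3 : ℕ) ^ n) := Odd.pow (by decide)
  obtain ⟨t, ht⟩ := h
  exact ⟨t, by omega⟩

lemma istar_succ (n : ℕ) : (3 ^ (n + 1) - 1) / 2 = 3 * ((3 ^ n - 1) / 2) + 1 := by
  obtain ⟨t, ht⟩ := istar_odd n
  have h2 : 3 ^ (n + 1) = 3 * 3 ^ n := by rw [pow_succ]; ring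
  omega

lemma ternaryOnes_istar (n : ℕ) : ternaryOnes ((3 ^ n - 1) / 2) = n := by
  induction n with
  | zero => simp [ternaryOnes]
  | succ n ih =>
    rw [istar_succ]
    unfold ternaryOnes
    rw [Nat.digits_def' (by norm_num : 1 < 3) (by omega : 0 < 3 * ((3 ^ n - 1) / 2) + 1)]
    have hmod : (3 * ((3 ^ n - 1) / 2) + 1) % 3 = 1 := by omega
    have hdiv : (3 * ((3 ^ n - 1) / 2) + 1) / 3 = (3 ^ n - 1) / 2 := by omega
    rw [hmod, hdiv]
    have ih' : (Nat.digits 3 ((3 ^ n - 1) / 2)).count 1 = n := ih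
    simp [List.count_cons, ih']

lemma istar_mem_goodIdx {δ : ℝ} (hδ0 : 0 < δ) (hδ : δ ≤ 1 / 3) {μ : Measure ℝ}
    (hμ : ternarySpec δ μ) {n k : ℕ} (hkn : k ≤ n) :
    (3 ^ n - 1) / 2 ∈ goodIdx δ μ n k := by
  have h1 : (1:ℕ) ≤ 3 ^ n := Nat.one_le_pow _ _ (by norm_num)
  have hlt : (3 ^ n - 1) / 2 < 3 ^ n := by omega
  have hspec := hμ 0 n ((3 ^ n - 1) / 2) hlt
  rw [Int.cast_zero, zero_add, zero_add, ternaryOnes_istar, Nat.sub_self, pow_zero, one_mul]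
    at hspec
  refine ⟨hlt, ?_⟩
  have htri : μ (triIco n ((3 ^ n - 1) / 2)) = ENNReal.ofReal ((1 - 2 * δ) ^ n) := hspec
  rw [htri]
  apply ENNReal.ofReal_le_ofReal
  have h2 : δ ≤ 1 - 2 * δ := by linarith
  have h3 : (0:ℝ) ≤ 1 - 2 * δ := by linarith
  calc δ ^ k * (1 - 2 * δ) ^ (n - k) ≤ (1 - 2 * δ) ^ k * (1 - 2 * δ) ^ (n - k) :=
        mul_le_mul_of_nonneg_right (pow_le_pow_left₀ hδ0.le h2 k) (pow_nonneg h3 _)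
    _ = (1 - 2 * δ) ^ n := by rw [← pow_add]; congr 1; omega

end GammaAux

/-- The set `Γ(n,k)` is a connected subset of `ℝ^d`. -/
theorem GammaNK_isConnected (d : ℕ) (hd : 2 ≤ d) (δ : ℝ) (hδ0 : 0 < δ) (hδ : δ ≤ 1 / 3)
    (μ : Measure ℝ) (hμ : ternarySpec δ μ) (n k : ℕ) (hkn : k ≤ n) :
    IsConnected (GammaNK d δ μ n k) := by
  have hfin : (goodIdx δ μ n k).Finite :=
    (Set.finite_Iio (3 ^ n)).subset fun i hi => hi.1
  have hne : (goodIdx δ μ n k).Nonempty :=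
    ⟨_, GammaAux.istar_mem_goodIdx hδ0 hδ hμ hkn⟩
  exact GammaAux.gamma_general d (by omega) n (goodIdx δ μ n k) hfin hne
end
end

section
/- Fix δ ∈ (0,1/3], d ≥ 2 and integers n, k with 2δn ≤ k ≤ (2/3)n. With μ, K(n,k), 𝒦^d(n,k), 𝒢(n,k) and the skeleton Sk as in the triadic construction, let Γ(n,k) = ∪_{Q ∈ 𝒦^d(n,k)} Sk(Q) ∪ ∪_{I_1,…,I_d ∈ 𝒢(n,k)} Sk(I_1×⋯×I_d). Then the one-dimensional Hausdorff measure satisfies ℋ¹(Γ(n,k)) ≤ d·2^d·e^{dk[1 + log(1/δ)]}. -/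
open MeasureTheory Set

noncomputable section

/-- A subset of `ℝ^d = Fin d → ℝ`, viewed in the Euclidean space `ℝ^d`. -/
def toEuc (d : ℕ) (s : Set (Fin d → ℝ)) : Set (EuclideanSpace ℝ (Fin d)) :=
  (MeasurableEquiv.toLp 2 (Fin d → ℝ)) '' s


/-! ### Auxiliary machinery -/

open scoped Classical

namespace GammaAux

/-! #### Segments and skeletons -/

lemma lipschitz_seg (d : ℕ) (j : Fin d) (c : Fin d → ℝ) :
    LipschitzWith 1 (fun t : ℝ => (MeasurableEquiv.toLp 2 (Fin d → ℝ))
      (fun m => if m = j then t else c m)) := by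
  apply LipschitzWith.of_dist_le_mul
  intro t t'
  simp only [NNReal.coe_one, one_mul]
  have hcoord : ∀ (t : ℝ) (m : Fin d),
      ((MeasurableEquiv.toLp 2 (Fin d → ℝ)) (fun m => if m = j then t else c m)) m
        = if m = j then t else c m := fun _ _ => rfl
  rw [EuclideanSpace.dist_eq]
  have : ∀ m : Fin d, dist (((MeasurableEquiv.toLp 2 (Fin d → ℝ))
        (fun m => if m = j then t else c m)) m)
      (((MeasurableEquiv.toLp 2 (Fin d → ℝ)) (fun m => if m = j then t' else c m)) m) ^ 2
      = if m = j then dist t t' ^ 2 else 0 := by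
    intro m; rw [hcoord, hcoord]; by_cases h : m = j <;> simp [h]
  rw [Finset.sum_congr rfl (fun m _ => this m),
    Finset.sum_ite_eq' Finset.univ j (fun _ => dist t t' ^ 2)]
  simp [Real.sqrt_sq dist_nonneg]

lemma seg_measure (d : ℕ) (j : Fin d) (c : Fin d → ℝ) (a b : ℝ) :
    μH[1] (toEuc d ((fun t : ℝ => fun m : Fin d => if m = j then t else c m) '' Icc a b)) ≤
      ENNReal.ofReal (b - a) := by
  have him : toEuc d ((fun t : ℝ => fun m : Fin d => if m = j then t else c m) '' Icc a b)
      = (fun t : ℝ => (MeasurableEquiv.toLp 2 (Fin d → ℝ))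
          (fun m => if m = j then t else c m)) '' Icc a b := by
    rw [toEuc, ← Set.image_comp]; rfl
  rw [him]
  calc μH[1] ((fun t : ℝ => (MeasurableEquiv.toLp 2 (Fin d → ℝ))
          (fun m => if m = j then t else c m)) '' Icc a b)
      ≤ (1 : NNReal) ^ (1:ℝ) * μH[1] (Icc a b) :=
        (lipschitz_seg d j c).hausdorffMeasure_image_le zero_le_one _
    _ = ENNReal.ofReal (b - a) := by
        rw [MeasureTheory.hausdorffMeasure_real]
        simp [Real.volume_Icc]

lemma sk_measure (d : ℕ) (I : Fin d → Set ℝ) (a b : Fin d → ℝ)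
    (hsub : ∀ j, I j ⊆ Icc (a j) (b j))
    (hfr : ∀ j, frontier (I j) ⊆ {a j, b j})
    (hlen : ∀ j, b j - a j ≤ 1) :
    μH[1] (toEuc d (Sk d I)) ≤ (d : ENNReal) * 2 ^ (d - 1) := by
  classical
  rw [Sk, toEuc, Set.image_iUnion]
  refine le_trans (measure_iUnion_fintype_le _ _) ?_
  have hpiece : ∀ j : Fin d,
      μH[1] ((MeasurableEquiv.toLp 2 (Fin d → ℝ)) ''
        (Set.pi Set.univ fun m => if m = j then I m else frontier (I m))) ≤ 2 ^ (d - 1) := by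
    intro j
    set seg : ({m : Fin d // m ≠ j} → Bool) → Set (Fin d → ℝ) := fun ε =>
      (fun t : ℝ => fun m : Fin d =>
        if m = j then t else (if h : m = j then 0 else (if ε ⟨m, h⟩ then b m else a m))) ''
        Icc (a j) (b j) with hseg
    have hcover : (Set.pi Set.univ fun m => if m = j then I m else frontier (I m)) ⊆
        ⋃ ε : {m : Fin d // m ≠ j} → Bool, seg ε := by
      intro x hx
      simp only [Set.mem_pi, Set.mem_univ, forall_true_left] at hx
      refine Set.mem_iUnion.2 ⟨fun m => decide (x m.1 = b m.1), ?_⟩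
      refine ⟨x j, ?_, ?_⟩
      · have := hx j; rw [if_pos rfl] at this; exact hsub j this
      · funext m
        by_cases h : m = j
        · subst h; simp
        · have hxm := hx m; rw [if_neg h] at hxm
          have hmem : x m = a m ∨ x m = b m := by
            rcases hfr m hxm with h1 | h1
            · exact Or.inl h1
            · exact Or.inr h1
          simp only [if_neg h, dif_neg h]
          by_cases hb : x m = b m
          · simp [hb]
          · rcases hmem with h1 | h1
            · simp [hb, h1]; exact fun h2 => h2.symm
            · exact absurd h1 hb
    refine le_trans (measure_mono (Set.image_mono hcover)) ?_
    rw [Set.image_iUnion]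
    refine le_trans (measure_iUnion_fintype_le _ _) ?_
    have hone : ∀ ε : {m : Fin d // m ≠ j} → Bool,
        μH[1] ((MeasurableEquiv.toLp 2 (Fin d → ℝ)) '' seg ε) ≤ 1 := by
      intro ε
      refine le_trans (seg_measure d j _ (a j) (b j)) ?_
      calc ENNReal.ofReal (b j - a j) ≤ ENNReal.ofReal 1 := ENNReal.ofReal_le_ofReal (hlen j)
        _ = 1 := ENNReal.ofReal_one
    refine le_trans (Finset.sum_le_sum fun ε _ => hone ε) ?_
    rw [Finset.sum_const, Finset.card_univ]
    have hcard : Fintype.card ({m : Fin d // m ≠ j} → Bool) = 2 ^ (d - 1) := by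
      rw [Fintype.card_fun, Fintype.card_bool]
      congr 1
      rw [Fintype.card_subtype_compl, Fintype.card_fin, Fintype.card_subtype_eq]
    rw [hcard]
    simp
  refine le_trans (Finset.sum_le_sum fun j _ => hpiece j) ?_
  rw [Finset.sum_const, Finset.card_univ, Fintype.card_fin]
  simp [mul_comm]

/-! #### Basic facts about the triadic intervals and `K(n,k)` -/

variable {δ : ℝ} {μ : Measure ℝ} {n k : ℕ}

lemma triIco_subset_Ico01 {i : ℕ} (h : i < 3 ^ n) : triIco n i ⊆ Ico (0:ℝ) 1 := by
  intro y hy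
  have h3 : (0:ℝ) < 3 ^ n := by positivity
  constructor
  · exact le_trans (by positivity) hy.1
  · refine lt_of_lt_of_le hy.2 ?_
    rw [div_le_one h3]
    have : (i : ℝ) + 1 ≤ (3:ℝ) ^ n := by exact_mod_cast h
    simpa using this

lemma Kset_subset_Ico01 : Kset δ μ n k ⊆ Ico (0:ℝ) 1 := by
  intro y hy
  rcases Set.mem_iUnion₂.1 hy with ⟨i, hi, hyi⟩
  exact triIco_subset_Ico01 hi.1 hyi

lemma triIco_disjoint {i j : ℕ} (h : i ≠ j) : Disjoint (triIco n i) (triIco n j) := by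
  have h3 : (0:ℝ) < 3 ^ n := by positivity
  rw [triIco, triIco, Set.Ico_disjoint_Ico]
  rcases lt_or_gt_of_ne h with hlt | hlt
  · refine le_trans (min_le_left _ _) (le_trans ?_ (le_max_right _ _))
    have : (i:ℝ) + 1 ≤ j := by exact_mod_cast hlt
    gcongr
  · refine le_trans (min_le_right _ _) (le_trans ?_ (le_max_left _ _))
    have : (j:ℝ) + 1 ≤ i := by exact_mod_cast hlt
    gcongr

lemma mu_Ico01 (hμ : ternarySpec δ μ) : μ (Ico (0:ℝ) 1) = 1 := by
  have := hμ 0 0 0 (by norm_num)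
  have h0 : ternaryOnes 0 = 0 := by simp [ternaryOnes]
  rw [h0] at this
  norm_num at this
  convert this using 2 <;> norm_num

lemma good_card_le (hμ : ternarySpec δ μ) :
    (((Finset.range (3 ^ n)).filter (· ∈ goodIdx δ μ n k)).card : ENNReal) *
      ENNReal.ofReal (δ ^ k * (1 - 2 * δ) ^ (n - k)) ≤ 1 := by
  classical
  set Gfin := (Finset.range (3 ^ n)).filter (· ∈ goodIdx δ μ n k) with hG
  have hdisj : (↑Gfin : Set ℕ).PairwiseDisjoint (triIco n) := fun i _ j _ hij =>
    triIco_disjoint hij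
  have hmeas : ∀ b ∈ Gfin, MeasurableSet (triIco n b) := fun b _ => measurableSet_Ico
  have hsum : ∑ i ∈ Gfin, μ (triIco n i) = μ (⋃ i ∈ Gfin, triIco n i) :=
    (measure_biUnion_finset hdisj hmeas).symm
  have hle : μ (⋃ i ∈ Gfin, triIco n i) ≤ μ (Ico (0:ℝ) 1) := by
    refine measure_mono (Set.iUnion₂_subset fun i hi => ?_)
    rw [hG, Finset.mem_filter, Finset.mem_range] at hi
    exact triIco_subset_Ico01 hi.1
  have hlow : (Gfin.card : ENNReal) * ENNReal.ofReal (δ ^ k * (1 - 2 * δ) ^ (n - k)) ≤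
      ∑ i ∈ Gfin, μ (triIco n i) := by
    have hss : ∑ _i ∈ Gfin, ENNReal.ofReal (δ ^ k * (1 - 2 * δ) ^ (n - k)) ≤
        ∑ i ∈ Gfin, μ (triIco n i) := by
      refine Finset.sum_le_sum fun i hi => ?_
      rw [hG, Finset.mem_filter] at hi
      exact hi.2.2
    simpa [Finset.sum_const, nsmul_eq_mul] using hss
  calc (Gfin.card : ENNReal) * ENNReal.ofReal (δ ^ k * (1 - 2 * δ) ^ (n - k))
      ≤ ∑ i ∈ Gfin, μ (triIco n i) := hlow
    _ = μ (⋃ i ∈ Gfin, triIco n i) := hsum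
    _ ≤ μ (Ico (0:ℝ) 1) := hle
    _ = 1 := mu_Ico01 hμ

lemma analysis_bound (hδ0 : 0 < δ) (hδ : δ ≤ 1 / 3)
    (hk1 : 2 * δ * n ≤ (k : ℝ)) (hkn : k ≤ n) :
    1 ≤ δ ^ k * (1 - 2 * δ) ^ (n - k) * Real.exp (k * (1 + Real.log (1 / δ))) := by
  have hA : (0:ℝ) < 1 - 2 * δ := by linarith
  have hexp : Real.exp ((k:ℝ) * (1 + Real.log (1 / δ))) =
      Real.exp (k:ℝ) * (1 / δ) ^ k := by
    rw [mul_add, mul_one, Real.exp_add]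
    congr 1
    rw [Real.exp_nat_mul, Real.exp_log (by positivity)]
  have hlog : Real.log (1 / (1 - 2 * δ)) ≤ 2 * δ / (1 - 2 * δ) := by
    have := Real.log_le_sub_one_of_pos (show (0:ℝ) < 1 / (1 - 2 * δ) by positivity)
    have he : 1 / (1 - 2 * δ) - 1 = 2 * δ / (1 - 2 * δ) := by field_simp; ring
    linarith [he ▸ this]
  have hcast : ((n - k : ℕ) : ℝ) = (n : ℝ) - k := Nat.cast_sub hkn
  have hkey : ((n - k : ℕ) : ℝ) * Real.log (1 / (1 - 2 * δ)) ≤ (k : ℝ) := by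
    have hnk : (0:ℝ) ≤ (n:ℝ) - k := by
      rw [← hcast]; positivity
    have h1 : ((n - k : ℕ) : ℝ) * Real.log (1 / (1 - 2 * δ)) ≤
        ((n:ℝ) - k) * (2 * δ / (1 - 2 * δ)) := by
      rw [hcast]
      exact mul_le_mul_of_nonneg_left hlog hnk
    have h2 : ((n:ℝ) - k) * (2 * δ / (1 - 2 * δ)) ≤ (k : ℝ) := by
      rw [← mul_div_assoc, div_le_iff₀ hA]
      nlinarith
    linarith
  have h5 : (1 / (1 - 2 * δ)) ^ (n - k) ≤ Real.exp (k : ℝ) := by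
    have e1 : (1 / (1 - 2 * δ)) ^ (n - k) =
        Real.exp (((n - k : ℕ) : ℝ) * Real.log (1 / (1 - 2 * δ))) := by
      rw [Real.exp_nat_mul, Real.exp_log (by positivity)]
    rw [e1]
    exact Real.exp_le_exp.2 hkey
  have hd1 : δ ^ k * (1 / δ) ^ k = 1 := by
    rw [← mul_pow, mul_one_div, div_self hδ0.ne', one_pow]
  have hA1 : (1 - 2 * δ) ^ (n - k) * (1 / (1 - 2 * δ)) ^ (n - k) = 1 := by
    rw [← mul_pow, mul_one_div, div_self hA.ne', one_pow]
  have hAp : (0:ℝ) < (1 - 2 * δ) ^ (n - k) := by positivity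
  have hfin : 1 ≤ (1 - 2 * δ) ^ (n - k) * Real.exp (k : ℝ) := by
    have := mul_le_mul_of_nonneg_left h5 hAp.le
    rw [hA1] at this
    exact this
  rw [hexp]
  calc (1:ℝ) ≤ (1 - 2 * δ) ^ (n - k) * Real.exp (k : ℝ) := hfin
    _ = δ ^ k * (1 - 2 * δ) ^ (n - k) * (Real.exp (k : ℝ) * (1 / δ) ^ k) := by
        rw [show δ ^ k * (1 - 2 * δ) ^ (n - k) * (Real.exp (k : ℝ) * (1 / δ) ^ k)
          = (δ ^ k * (1 / δ) ^ k) * ((1 - 2 * δ) ^ (n - k) * Real.exp (k : ℝ)) from by ring,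
          hd1, one_mul]

/-! #### Structure of the gaps -/

lemma gap_no_ray_right {C : Set ℝ} (hC : C ∈ gaps (Kset δ μ n k)) {y : ℝ} (hy : y ∈ C)
    (hK : ∀ z, y ≤ z → z ∉ Kset δ μ n k) : False := by
  obtain ⟨hb, x, hx, rfl⟩ := hC
  have h1 : Ici y ⊆ (Kset δ μ n k)ᶜ := fun z hz => hK z hz
  have h2 : Ici y ⊆ connectedComponentIn (Kset δ μ n k)ᶜ x := by
    rw [connectedComponentIn_eq hy]
    exact isPreconnected_Ici.subset_connectedComponentIn self_mem_Ici h1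
  obtain ⟨u, hu⟩ := (hb.subset h2).bddAbove
  have := hu (show max u y + 1 ∈ Ici y from le_trans (le_max_right u y) (by linarith))
  have := le_max_left u y
  linarith

lemma gap_no_ray_left {C : Set ℝ} (hC : C ∈ gaps (Kset δ μ n k)) {y : ℝ} (hy : y ∈ C)
    (hK : ∀ z, z ≤ y → z ∉ Kset δ μ n k) : False := by
  obtain ⟨hb, x, hx, rfl⟩ := hC
  have h1 : Iic y ⊆ (Kset δ μ n k)ᶜ := fun z hz => hK z hz
  have h2 : Iic y ⊆ connectedComponentIn (Kset δ μ n k)ᶜ x := by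
    rw [connectedComponentIn_eq hy]
    exact isPreconnected_Iic.subset_connectedComponentIn self_mem_Iic h1
  obtain ⟨u, hu⟩ := (hb.subset h2).bddBelow
  have h3 : u ≤ min u y - 1 := hu (show min u y - 1 ∈ Iic y by
    simp only [mem_Iic]; linarith [min_le_right u y])
  have := min_le_left u y
  linarith

lemma gap_subset_Icc01 {C : Set ℝ} (hC : C ∈ gaps (Kset δ μ n k)) : C ⊆ Icc (0:ℝ) 1 := by
  intro y hy
  constructor
  · by_contra h
    push_neg at h
    exact gap_no_ray_left hC hy fun z hz hzK =>
      absurd (Kset_subset_Ico01 hzK).1 (by linarith)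
  · by_contra h
    push_neg at h
    exact gap_no_ray_right hC hy fun z hz hzK =>
      absurd (Kset_subset_Ico01 hzK).2 (by linarith)

lemma gap_nonempty {C : Set ℝ} (hC : C ∈ gaps (Kset δ μ n k)) : C.Nonempty := by
  obtain ⟨hb, x, hx, rfl⟩ := hC
  exact ⟨x, mem_connectedComponentIn hx⟩

lemma gap_ordConnected {C : Set ℝ} (hC : C ∈ gaps (Kset δ μ n k)) : C.OrdConnected := by
  obtain ⟨hb, x, hx, rfl⟩ := hC
  exact isPreconnected_connectedComponentIn.ordConnected

lemma gap_subset_Icc {C : Set ℝ} (hC : C ∈ gaps (Kset δ μ n k)) :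
    C ⊆ Icc (sInf C) (sSup C) := by
  intro y hy
  obtain ⟨hb, -⟩ := hC
  exact ⟨csInf_le hb.bddBelow hy, le_csSup hb.bddAbove hy⟩

lemma gap_sInf_nonneg {C : Set ℝ} (hC : C ∈ gaps (Kset δ μ n k)) : 0 ≤ sInf C :=
  le_csInf (gap_nonempty hC) fun y hy => (gap_subset_Icc01 hC hy).1

lemma gap_sSup_le_one {C : Set ℝ} (hC : C ∈ gaps (Kset δ μ n k)) : sSup C ≤ 1 :=
  csSup_le (gap_nonempty hC) fun y hy => (gap_subset_Icc01 hC hy).2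

lemma gap_frontier {C : Set ℝ} (hC : C ∈ gaps (Kset δ μ n k)) :
    frontier C ⊆ {sInf C, sSup C} := by
  have hne := gap_nonempty hC
  have hIoo : Ioo (sInf C) (sSup C) ⊆ C := by
    intro z hz
    obtain ⟨y, hy, hyz⟩ := exists_lt_of_csInf_lt hne hz.1
    obtain ⟨y', hy', hzy'⟩ := exists_lt_of_lt_csSup hne hz.2
    exact (gap_ordConnected hC).out hy hy' ⟨le_of_lt hyz, le_of_lt hzy'⟩
  intro z hz
  have h1 : z ∈ closure C := hz.1
  have h2 : z ∉ interior C := hz.2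
  have hcl : z ∈ Icc (sInf C) (sSup C) :=
    (isClosed_Icc.closure_subset_iff.2 (gap_subset_Icc hC)) h1
  have hni : z ∉ Ioo (sInf C) (sSup C) := fun h => h2 (interior_maximal hIoo isOpen_Ioo h)
  rcases eq_or_lt_of_le hcl.1 with h | h
  · exact Or.inl h.symm
  · rcases eq_or_lt_of_le hcl.2 with h' | h'
    · exact Or.inr h'
    · exact absurd ⟨h, h'⟩ hni

/-! #### Counting the gaps -/

/-- The least good index whose left endpoint lies strictly to the right of the gap `C`. -/
def gapIdx (δ : ℝ) (μ : Measure ℝ) (n k : ℕ) (C : Set ℝ) : ℕ :=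
  sInf {i | i ∈ goodIdx δ μ n k ∧ ∀ y ∈ C, y < (i : ℝ) / 3 ^ n}

lemma gap_subset_compl {C : Set ℝ} (hC : C ∈ gaps (Kset δ μ n k)) : C ⊆ (Kset δ μ n k)ᶜ := by
  obtain ⟨hb, x, hx, rfl⟩ := hC
  exact connectedComponentIn_subset _ _

lemma triIco_subset_Kset {i : ℕ} (hi : i ∈ goodIdx δ μ n k) : triIco n i ⊆ Kset δ μ n k :=
  fun y hy => Set.mem_biUnion hi hy

lemma gapIdx_set_nonempty {C : Set ℝ} (hC : C ∈ gaps (Kset δ μ n k)) :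
    {i | i ∈ goodIdx δ μ n k ∧ ∀ y ∈ C, y < (i : ℝ) / 3 ^ n}.Nonempty := by
  classical
  obtain ⟨y0, hy0⟩ := gap_nonempty hC
  have hgne : ∃ i, i ∈ goodIdx δ μ n k := by
    by_contra hempty
    push_neg at hempty
    refine gap_no_ray_right hC hy0 fun z _ hz => ?_
    rcases Set.mem_iUnion₂.1 hz with ⟨i, hi, -⟩
    exact hempty i hi
  set Gfin : Finset ℕ := (Finset.range (3 ^ n)).filter (· ∈ goodIdx δ μ n k) with hGfin
  have hmem : ∀ i, i ∈ Gfin ↔ i ∈ goodIdx δ μ n k := by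
    intro i
    simp only [hGfin, Finset.mem_filter, Finset.mem_range]
    exact ⟨fun h => h.2, fun h => ⟨h.1, h⟩⟩
  obtain ⟨i0, hi0⟩ := hgne
  have hGne : Gfin.Nonempty := ⟨i0, (hmem i0).2 hi0⟩
  set it := Gfin.max' hGne with hit
  have hitg : it ∈ goodIdx δ μ n k := (hmem it).1 (Gfin.max'_mem hGne)
  refine ⟨it, hitg, fun y hy => ?_⟩
  by_contra hyl
  push_neg at hyl
  have hynK : y ∉ Kset δ μ n k := gap_subset_compl hC hy
  have hyt : ((it : ℝ) + 1) / 3 ^ n ≤ y := by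
    by_contra hlt
    push_neg at hlt
    exact hynK (triIco_subset_Kset hitg ⟨hyl, hlt⟩)
  refine gap_no_ray_right hC hy fun z hz hzK => ?_
  rcases Set.mem_iUnion₂.1 hzK with ⟨i, hi, hzi⟩
  have hile : i ≤ it := Gfin.le_max' i ((hmem i).2 hi)
  have h3 : (0:ℝ) < 3 ^ n := by positivity
  have hmono : ((i : ℝ) + 1) / 3 ^ n ≤ ((it : ℝ) + 1) / 3 ^ n := by
    have : (i : ℝ) ≤ it := Nat.cast_le.2 hile
    gcongr
  linarith [hzi.2]

lemma gapIdx_spec {C : Set ℝ} (hC : C ∈ gaps (Kset δ μ n k)) :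
    gapIdx δ μ n k C ∈ goodIdx δ μ n k ∧ ∀ y ∈ C, y < (gapIdx δ μ n k C : ℝ) / 3 ^ n :=
  Nat.sInf_mem (gapIdx_set_nonempty hC)

lemma gapIdx_lt {C C' : Set ℝ} (hC : C ∈ gaps (Kset δ μ n k)) (hC' : C' ∈ gaps (Kset δ μ n k))
    (hne : C ≠ C') {x x' : ℝ} (hx : x ∈ C) (hx' : x' ∈ C') (hlt : x < x') :
    gapIdx δ μ n k C < gapIdx δ μ n k C' := by
  have h3 : (0:ℝ) < 3 ^ n := by positivity
  have hbetween : ∃ y ∈ Icc x x', y ∈ Kset δ μ n k := by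
    by_contra hno
    push_neg at hno
    obtain ⟨hb, x0, hx0, hC0⟩ := hC
    obtain ⟨hb', x1, hx1, hC1⟩ := hC'
    have hsub : Icc x x' ⊆ (Kset δ μ n k)ᶜ := fun y hy => hno y hy
    have h1 : Icc x x' ⊆ connectedComponentIn (Kset δ μ n k)ᶜ x :=
      isPreconnected_Icc.subset_connectedComponentIn (left_mem_Icc.2 hlt.le) hsub
    have hCx : C = connectedComponentIn (Kset δ μ n k)ᶜ x := by
      rw [hC0]; exact connectedComponentIn_eq (hC0 ▸ hx)
    have hx'C : x' ∈ C := by rw [hCx]; exact h1 (right_mem_Icc.2 hlt.le)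
    have hCC' : C = C' := by
      have e1 : C = connectedComponentIn (Kset δ μ n k)ᶜ x' := by
        rw [hCx]; exact connectedComponentIn_eq (hCx ▸ hx'C)
      have e2 : C' = connectedComponentIn (Kset δ μ n k)ᶜ x' := by
        rw [hC1]; exact connectedComponentIn_eq (hC1 ▸ hx')
      rw [e1, e2]
    exact hne hCC'
  obtain ⟨y, hyI, hyK⟩ := hbetween
  rcases Set.mem_iUnion₂.1 hyK with ⟨i0, hi0, hyi0⟩
  have hxy : x < y := lt_of_le_of_ne hyI.1 (fun h => (gap_subset_compl hC hx) (h ▸ hyK))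
  have hyx' : y < x' := lt_of_le_of_ne hyI.2 (fun h => (gap_subset_compl hC' hx') (h.symm ▸ hyK))
  have hi0W : i0 ∈ {i | i ∈ goodIdx δ μ n k ∧ ∀ z ∈ C, z < (i : ℝ) / 3 ^ n} := by
    refine ⟨hi0, fun z hz => ?_⟩
    by_contra hzl
    push_neg at hzl
    have hznK : z ∉ Kset δ μ n k := gap_subset_compl hC hz
    have hzt : ((i0 : ℝ) + 1) / 3 ^ n ≤ z := by
      by_contra hl
      push_neg at hl
      exact hznK (triIco_subset_Kset hi0 ⟨hzl, hl⟩)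
    have hyz : y < z := lt_of_lt_of_le hyi0.2 hzt
    have : y ∈ C := (gap_ordConnected hC).out hx hz ⟨hxy.le, hyz.le⟩
    exact gap_subset_compl hC this hyK
  have h1 : gapIdx δ μ n k C ≤ i0 := Nat.sInf_le hi0W
  obtain ⟨-, h2⟩ := gapIdx_spec hC'
  have hx'lt : x' < (gapIdx δ μ n k C' : ℝ) / 3 ^ n := h2 x' hx'
  have hlt2 : (i0 : ℝ) / 3 ^ n < (gapIdx δ μ n k C' : ℝ) / 3 ^ n := lt_of_le_of_lt hyi0.1
    (lt_trans hyx' hx'lt)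
  have hi0lt : i0 < gapIdx δ μ n k C' := by
    by_contra hcon
    push_neg at hcon
    have hcast : (gapIdx δ μ n k C' : ℝ) ≤ i0 := Nat.cast_le.2 hcon
    have h4 : (gapIdx δ μ n k C' : ℝ) / 3 ^ n ≤ (i0 : ℝ) / 3 ^ n := by gcongr
    linarith
  exact lt_of_le_of_lt h1 hi0lt

lemma gapIdx_injOn : Set.InjOn (gapIdx δ μ n k) (gaps (Kset δ μ n k)) := by
  intro C hC C' hC' heq
  by_contra hne
  obtain ⟨x, hx⟩ := gap_nonempty hC
  obtain ⟨x', hx'⟩ := gap_nonempty hC'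
  rcases lt_trichotomy x x' with h | h | h
  · exact absurd heq (Nat.ne_of_lt (gapIdx_lt hC hC' hne hx hx' h))
  · apply hne
    obtain ⟨-, x0, -, hC0⟩ := hC
    obtain ⟨-, x1, -, hC1⟩ := hC'
    have e1 : C = connectedComponentIn (Kset δ μ n k)ᶜ x := by
      rw [hC0]; exact connectedComponentIn_eq (hC0 ▸ hx)
    have e2 : C' = connectedComponentIn (Kset δ μ n k)ᶜ x' := by
      rw [hC1]; exact connectedComponentIn_eq (hC1 ▸ hx')
    rw [e1, e2, h]
  · exact absurd heq.symm (Nat.ne_of_lt (gapIdx_lt hC' hC (Ne.symm hne) hx' hx h))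

end GammaAux

open GammaAux

set_option maxHeartbeats 1000000 in
/-- If `2δn ≤ k ≤ (2/3)n` then `ℋ¹(Γ(n,k)) ≤ d·2^d·exp(dk(1 + log(1/δ)))`. -/
theorem hausdorff_GammaNK_le (d : ℕ) (hd : 2 ≤ d) (δ : ℝ) (hδ0 : 0 < δ) (hδ : δ ≤ 1 / 3)
    (μ : Measure ℝ) (hμ : ternarySpec δ μ) (n k : ℕ)
    (hk1 : 2 * δ * n ≤ (k : ℝ)) (hk2 : (k : ℝ) ≤ 2 / 3 * n) :
    μH[1] (toEuc d (GammaNK d δ μ n k)) ≤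
      ENNReal.ofReal ((d : ℝ) * 2 ^ d *
        Real.exp ((d : ℝ) * k * (1 + Real.log (1 / δ)))) := by
  classical
  have h3 : (0:ℝ) < 3 ^ n := by positivity
  have hA : (0:ℝ) < 1 - 2 * δ := by linarith
  have hkn : k ≤ n := by
    have hn0 : (0:ℝ) ≤ (n:ℝ) := Nat.cast_nonneg n
    have : (k:ℝ) ≤ (n:ℝ) := by linarith
    exact_mod_cast this
  obtain ⟨Gfin, hmemG⟩ : ∃ G : Finset ℕ, ∀ i, i ∈ G ↔ i ∈ goodIdx δ μ n k :=
    ⟨(Finset.range (3 ^ n)).filter (· ∈ goodIdx δ μ n k), fun i => by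
      simp only [Finset.mem_filter, Finset.mem_range]
      exact ⟨fun h => h.2, fun h => ⟨h.1, h⟩⟩⟩
  set E := Real.exp ((k:ℝ) * (1 + Real.log (1 / δ))) with hE
  -- `Gfin.card ≤ E` via the Markov bound and the analytic estimate
  have hc0 : (0:ℝ) < δ ^ k * (1 - 2 * δ) ^ (n - k) := by positivity
  have hNreal : (Gfin.card : ℝ) * (δ ^ k * (1 - 2 * δ) ^ (n - k)) ≤ 1 := by
    have hGeq : (Finset.range (3 ^ n)).filter (· ∈ goodIdx δ μ n k) = Gfin :=
      Finset.ext fun i => by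
        simp only [Finset.mem_filter, Finset.mem_range, hmemG i]
        exact ⟨fun h => h.2, fun h => ⟨h.1, h⟩⟩
    have hcard1 := good_card_le (n := n) (k := k) hμ
    rw [hGeq] at hcard1
    rw [← ENNReal.ofReal_natCast Gfin.card,
      ← ENNReal.ofReal_mul (Nat.cast_nonneg Gfin.card)] at hcard1
    exact ENNReal.ofReal_le_one.1 hcard1
  have hNE : (Gfin.card : ℝ) ≤ E := by
    have h2 := analysis_bound (n := n) (k := k) hδ0 hδ hk1 hkn
    rw [← hE] at h2
    by_contra hcon
    push_neg at hcon
    have h4 := mul_lt_mul_of_pos_right hcon hc0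
    nlinarith
  -- the gaps are finite, at most `Gfin.card` of them
  have hgapim : gapIdx δ μ n k '' gaps (Kset δ μ n k) ⊆ ↑Gfin := by
    rintro _ ⟨C, hC, rfl⟩
    exact Finset.mem_coe.2 ((hmemG _).2 (gapIdx_spec hC).1)
  have hgfin : (gaps (Kset δ μ n k)).Finite :=
    Set.Finite.of_finite_image (Gfin.finite_toSet.subset hgapim) gapIdx_injOn
  obtain ⟨GapsF, hmemGF⟩ : ∃ G : Finset (Set ℝ), ∀ C, C ∈ G ↔ C ∈ gaps (Kset δ μ n k) :=
    ⟨hgfin.toFinset, fun C => hgfin.mem_toFinset⟩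
  have hGapsCard : GapsF.card ≤ Gfin.card := by
    have hGFeq : (↑GapsF : Set (Set ℝ)) = gaps (Kset δ μ n k) := Set.ext fun C => hmemGF C
    have h1 : (gaps (Kset δ μ n k)).ncard ≤ Gfin.card := by
      rw [← Set.ncard_image_of_injOn gapIdx_injOn]
      calc (gapIdx δ μ n k '' gaps (Kset δ μ n k)).ncard
          ≤ (↑Gfin : Set ℕ).ncard := Set.ncard_le_ncard hgapim Gfin.finite_toSet
        _ = Gfin.card := by rw [Set.ncard_coe_finset]
    rwa [← hGFeq, Set.ncard_coe_finset] at h1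
  -- skeleton bounds
  have hcube : ∀ f : Fin d → ℕ, (∀ j, f j ∈ Gfin) →
      μH[1] (toEuc d (Sk d fun j => triIco n (f j))) ≤ (d : ENNReal) * 2 ^ (d - 1) := by
    intro f hf
    refine sk_measure d _ (fun j => (f j : ℝ) / 3 ^ n) (fun j => ((f j : ℝ) + 1) / 3 ^ n)
      (fun j => Ico_subset_Icc_self) (fun j => ?_) (fun j => ?_)
    · have hlt : (f j : ℝ) / 3 ^ n < ((f j : ℝ) + 1) / 3 ^ n := by
        have : (f j : ℝ) < (f j : ℝ) + 1 := by linarith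
        gcongr
      rw [triIco, frontier_Ico hlt]
    · have he : ((f j : ℝ) + 1) / 3 ^ n - (f j : ℝ) / 3 ^ n = 1 / 3 ^ n := by ring
      rw [he, div_le_one h3]
      exact one_le_pow₀ (by norm_num)
  have hgapsk : ∀ I : Fin d → Set ℝ, (∀ j, I j ∈ gaps (Kset δ μ n k)) →
      μH[1] (toEuc d (Sk d I)) ≤ (d : ENNReal) * 2 ^ (d - 1) := by
    intro I hIg
    refine sk_measure d _ (fun j => sInf (I j)) (fun j => sSup (I j))
      (fun j => gap_subset_Icc (hIg j)) (fun j => gap_frontier (hIg j)) (fun j => ?_)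
    have := gap_sInf_nonneg (hIg j)
    have := gap_sSup_le_one (hIg j)
    linarith
  -- assembling the measure estimate
  rw [GammaNK, toEuc, Set.image_union]
  refine le_trans (measure_union_le _ _) ?_
  obtain ⟨SF, hmemSF, hcardSF⟩ : ∃ S : Finset (Fin d → ℕ),
      (∀ f, f ∈ S ↔ ∀ j, f j ∈ Gfin) ∧ S.card = Gfin.card ^ d :=
    ⟨Fintype.piFinset (fun _ => Gfin), fun f => Fintype.mem_piFinset, by
      rw [Fintype.card_piFinset]
      simp⟩
  obtain ⟨TF, hmemTF, hcardTF⟩ : ∃ T : Finset (Fin d → Set ℝ),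
      (∀ I, I ∈ T ↔ ∀ j, I j ∈ GapsF) ∧ T.card = GapsF.card ^ d :=
    ⟨Fintype.piFinset (fun _ => GapsF), fun I => Fintype.mem_piFinset, by
      rw [Fintype.card_piFinset]
      simp⟩
  have hApart : μH[1] ((MeasurableEquiv.toLp 2 (Fin d → ℝ)) ''
      (⋃ f ∈ {f : Fin d → ℕ | ∀ j, f j ∈ goodIdx δ μ n k}, Sk d fun j => triIco n (f j))) ≤
      ((Gfin.card ^ d : ℕ) : ENNReal) * ((d : ENNReal) * 2 ^ (d - 1)) := by
    have hAsub : (⋃ f ∈ {f : Fin d → ℕ | ∀ j, f j ∈ goodIdx δ μ n k},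
        Sk d fun j => triIco n (f j)) ⊆ ⋃ f ∈ SF, Sk d fun j => triIco n (f j) := by
      intro x hx
      simp only [Set.mem_iUnion] at hx ⊢
      obtain ⟨f, hf, hxf⟩ := hx
      exact ⟨f, (hmemSF f).2 fun j => (hmemG _).2 (hf j), hxf⟩
    refine le_trans (measure_mono (Set.image_mono hAsub)) ?_
    rw [Set.image_iUnion₂]
    refine le_trans (measure_biUnion_finset_le _ _) ?_
    refine le_trans (Finset.sum_le_sum fun f hf =>
      hcube f ((hmemSF f).1 hf)) ?_
    rw [Finset.sum_const, nsmul_eq_mul, hcardSF]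
  have hBpart : μH[1] ((MeasurableEquiv.toLp 2 (Fin d → ℝ)) ''
      (⋃ I ∈ {I : Fin d → Set ℝ | ∀ j, I j ∈ gaps (Kset δ μ n k)}, Sk d I)) ≤
      ((Gfin.card ^ d : ℕ) : ENNReal) * ((d : ENNReal) * 2 ^ (d - 1)) := by
    have hBsub : (⋃ I ∈ {I : Fin d → Set ℝ | ∀ j, I j ∈ gaps (Kset δ μ n k)}, Sk d I) ⊆
        ⋃ I ∈ TF, Sk d I := by
      intro x hx
      simp only [Set.mem_iUnion] at hx ⊢
      obtain ⟨I, hI, hxI⟩ := hx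
      exact ⟨I, (hmemTF I).2 fun j => (hmemGF _).2 (hI j), hxI⟩
    refine le_trans (measure_mono (Set.image_mono hBsub)) ?_
    rw [Set.image_iUnion₂]
    refine le_trans (measure_biUnion_finset_le _ _) ?_
    refine le_trans (Finset.sum_le_sum fun I hI =>
      hgapsk I fun j => (hmemGF _).1 (((hmemTF I).1 hI) j)) ?_
    rw [Finset.sum_const, nsmul_eq_mul, hcardTF]
    refine mul_le_mul_left ?_ _
    exact_mod_cast Nat.cast_le.2 (Nat.pow_le_pow_left hGapsCard d)
  refine le_trans (add_le_add hApart hBpart) ?_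
  -- final arithmetic
  have hd1 : 1 ≤ d := le_trans (by norm_num) hd
  have h2d : (d : ENNReal) * 2 ^ (d - 1) + (d : ENNReal) * 2 ^ (d - 1)
      = (d : ENNReal) * 2 ^ d := by
    rw [← two_mul, ← mul_assoc, mul_comm (2 : ENNReal) (d : ENNReal), mul_assoc,
      ← pow_succ', Nat.sub_add_cancel hd1]
  have hEd : E ^ d = Real.exp ((d : ℝ) * k * (1 + Real.log (1 / δ))) := by
    rw [hE, ← Real.exp_nat_mul]
    congr 1
    ring
  have h1 : ((Gfin.card ^ d : ℕ) : ENNReal) ≤ ENNReal.ofReal (E ^ d) := by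
    rw [← ENNReal.ofReal_natCast (Gfin.card ^ d)]
    refine ENNReal.ofReal_le_ofReal ?_
    push_cast
    exact pow_le_pow_left₀ (Nat.cast_nonneg Gfin.card) hNE d
  have h2 : (d : ENNReal) * 2 ^ d = ENNReal.ofReal ((d : ℝ) * 2 ^ d) := by
    rw [ENNReal.ofReal_mul (Nat.cast_nonneg d), ENNReal.ofReal_natCast,
      ENNReal.ofReal_pow (by norm_num : (0:ℝ) ≤ 2), ENNReal.ofReal_ofNat]
  calc ((Gfin.card ^ d : ℕ) : ENNReal) * ((d : ENNReal) * 2 ^ (d - 1))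
        + ((Gfin.card ^ d : ℕ) : ENNReal) * ((d : ENNReal) * 2 ^ (d - 1))
      = ((Gfin.card ^ d : ℕ) : ENNReal) * ((d : ENNReal) * 2 ^ d) := by rw [← mul_add, h2d]
    _ ≤ ENNReal.ofReal (E ^ d) * ENNReal.ofReal ((d : ℝ) * 2 ^ d) := by
        rw [h2]; exact mul_le_mul_left h1 _
    _ = ENNReal.ofReal ((d : ℝ) * 2 ^ d * E ^ d) := by
        rw [← ENNReal.ofReal_mul (by positivity), mul_comm]
    _ = ENNReal.ofReal ((d : ℝ) * 2 ^ d *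
        Real.exp ((d : ℝ) * k * (1 + Real.log (1 / δ)))) := by rw [hEd]
end
end

section
/- Fix d ≥ 2, δ > 0 with 18d·[δ + δ·log(1/δ)] ≤ log 3, and an integer n_1 such that k_1 := 3δn_1 is an integer with k_1 ≥ 1; set n_l = l·n_1 and k_l = l·k_1. With 𝒦_l the collections of cubes of the iterated triadic construction with these parameters and K_l = ∪{Q : Q ∈ 𝒦_l}, the nested intersection ∩_{l≥1} K_l has one-dimensional Hausdorff measure zero: ℋ¹(∩_{l≥1} K_l) = 0. -/
open MeasureTheory Set

noncomputable section

/-- The data (lower-left corner, side length) of the cubes of the `l`-th generation `𝒦_l` of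
the iterated construction: `𝒦₀ = {[0,1)^d}` and `𝒦_l` is obtained from `𝒦_{l-1}` by replacing
each cube `Q` by the images under the affine map `A_Q` (taking `[0,1)^d` onto `Q`) of the
cubes of `𝒦^d(n_l, k_l)`. -/
def KData (d : ℕ) (δ : ℝ) (μ : Measure ℝ) (ns ks : ℕ → ℕ) : ℕ → Set ((Fin d → ℝ) × ℝ)
  | 0 => {(fun _ => 0, 1)}
  | l + 1 =>
    {q | ∃ p ∈ KData d δ μ ns ks l, ∃ f : Fin d → ℕ,
      (∀ j, f j ∈ goodIdx δ μ (ns (l + 1)) (ks (l + 1))) ∧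
      q.1 = (fun j => p.1 j + p.2 * (f j : ℝ) / 3 ^ ns (l + 1)) ∧
      q.2 = p.2 / 3 ^ ns (l + 1)}

/-- The half-open cube with lower-left corner `p.1` and side length `p.2`. -/
def cubeOf (d : ℕ) (p : (Fin d → ℝ) × ℝ) : Set (Fin d → ℝ) :=
  Set.pi Set.univ fun j => Set.Ico (p.1 j) (p.1 j + p.2)

/-- `K_l`, the union of the cubes of the collection `𝒦_l`. -/
def bigK (d : ℕ) (δ : ℝ) (μ : Measure ℝ) (ns ks : ℕ → ℕ) (l : ℕ) : Set (Fin d → ℝ) :=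
  ⋃ p ∈ KData d δ μ ns ks l, cubeOf d p

namespace AuxHK
open scoped ENNReal

open scoped Classical in
/-- The good indices as a `Finset`. -/
noncomputable def Gfin (δ : ℝ) (μ : Measure ℝ) (n k : ℕ) : Finset ℕ :=
  (Finset.range (3 ^ n)).filter
    (fun i => ENNReal.ofReal (δ ^ k * (1 - 2 * δ) ^ (n - k)) ≤ μ (triIco n i))

lemma mem_Gfin {δ : ℝ} {μ : Measure ℝ} {n k i : ℕ} :
    i ∈ Gfin δ μ n k ↔ i ∈ goodIdx δ μ n k := by
  classical
  simp [Gfin, goodIdx, Finset.mem_filter, Finset.mem_range]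

lemma triIco_disjoint {n i i' : ℕ} (h : i ≠ i') : Disjoint (triIco n i) (triIco n i') := by
  have p3 : (0:ℝ) < 3 ^ n := by positivity
  rw [Set.disjoint_left]
  rintro x ⟨h1, h2⟩ ⟨h3, h4⟩
  have e1 : (i : ℝ) ≤ x * 3 ^ n := by rwa [div_le_iff₀ p3] at h1
  have e2 : x * 3 ^ n < (i : ℝ) + 1 := by rwa [lt_div_iff₀ p3] at h2
  have e3 : (i' : ℝ) ≤ x * 3 ^ n := by rwa [div_le_iff₀ p3] at h3
  have e4 : x * 3 ^ n < (i' : ℝ) + 1 := by rwa [lt_div_iff₀ p3] at h4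
  have : (i : ℝ) < (i' : ℝ) + 1 := lt_of_le_of_lt e1 e4
  have : (i' : ℝ) < (i : ℝ) + 1 := lt_of_le_of_lt e3 e2
  have hii' : i < i' + 1 := by exact_mod_cast ‹(i : ℝ) < (i' : ℝ) + 1›
  have hi'i : i' < i + 1 := by exact_mod_cast ‹(i' : ℝ) < (i : ℝ) + 1›
  omega

lemma triIco_subset {n i : ℕ} (h : i < 3 ^ n) : triIco n i ⊆ Set.Ico (0:ℝ) 1 := by
  have p3 : (0:ℝ) < 3 ^ n := by positivity
  rintro x ⟨h1, h2⟩
  constructor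
  · exact le_trans (by positivity) h1
  · have : ((i : ℝ) + 1) / 3 ^ n ≤ 1 := by
      rw [div_le_one p3]
      have : (i : ℝ) + 1 ≤ (3 : ℝ) ^ n := by exact_mod_cast Nat.succ_le_of_lt h
      simpa using this
    exact lt_of_lt_of_le h2 this

lemma ternaryOnes_zero : ternaryOnes 0 = 0 := by simp [ternaryOnes]

lemma measure_Ico01 {δ : ℝ} {μ : Measure ℝ} (hμ : ternarySpec δ μ) :
    μ (Set.Ico (0:ℝ) 1) = 1 := by
  have := hμ 0 0 0 (by norm_num)
  simpa [ternaryOnes_zero] using this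

lemma Gfin_card_le {δ : ℝ} {μ : Measure ℝ} (hμ : ternarySpec δ μ) (n k : ℕ) :
    ((Gfin δ μ n k).card : ℝ≥0∞) * ENNReal.ofReal (δ ^ k * (1 - 2 * δ) ^ (n - k)) ≤ 1 := by
  set T := ENNReal.ofReal (δ ^ k * (1 - 2 * δ) ^ (n - k)) with hT
  have hdisj : (↑(Gfin δ μ n k) : Set ℕ).PairwiseDisjoint (triIco n) := by
    intro a _ b _ hab
    exact triIco_disjoint hab
  have hmeas : ∀ i ∈ Gfin δ μ n k, MeasurableSet (triIco n i) := fun i _ => measurableSet_Ico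
  have hsum : μ (⋃ i ∈ Gfin δ μ n k, triIco n i) = ∑ i ∈ Gfin δ μ n k, μ (triIco n i) :=
    measure_biUnion_finset hdisj hmeas
  have hsub : (⋃ i ∈ Gfin δ μ n k, triIco n i) ⊆ Set.Ico (0:ℝ) 1 := by
    refine Set.iUnion₂_subset fun i hi => triIco_subset (mem_Gfin.1 hi).1
  have hle1 : ∑ i ∈ Gfin δ μ n k, μ (triIco n i) ≤ 1 := by
    rw [← hsum, ← measure_Ico01 hμ]
    exact measure_mono hsub
  have hlow : (Gfin δ μ n k).card • T ≤ ∑ i ∈ Gfin δ μ n k, μ (triIco n i) :=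
    Finset.card_nsmul_le_sum _ _ _ (fun i hi => (mem_Gfin.1 hi).2)
  calc ((Gfin δ μ n k).card : ℝ≥0∞) * T = (Gfin δ μ n k).card • T := by
        rw [nsmul_eq_mul]
    _ ≤ _ := hlow.trans hle1

lemma Gfin_card_le_real {δ : ℝ} {μ : Measure ℝ} (hδ0 : 0 < δ) (hδ : δ ≤ 1/3)
    (hμ : ternarySpec δ μ) (n k : ℕ) :
    ((Gfin δ μ n k).card : ℝ) * (δ ^ k * (1 - 2 * δ) ^ (n - k)) ≤ 1 := by
  have h2δ : (0:ℝ) < 1 - 2 * δ := by linarith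
  have hTpos : (0:ℝ) < δ ^ k * (1 - 2 * δ) ^ (n - k) := by positivity
  have := Gfin_card_le hμ n k
  rw [← ENNReal.ofReal_natCast, ← ENNReal.ofReal_mul (by positivity),
    ← ENNReal.ofReal_one] at this
  exact (ENNReal.ofReal_le_ofReal_iff (by norm_num)).1 this

end AuxHK
namespace AuxHK

/-- One refinement step of the cover construction. -/
noncomputable def stepFun (d m : ℕ) (pf : ((Fin d → ℝ) × ℝ) × (Fin d → ℕ)) :
    (Fin d → ℝ) × ℝ :=
  (fun j => pf.1.1 j + pf.1.2 * (pf.2 j : ℝ) / 3 ^ m, pf.1.2 / 3 ^ m)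

/-- A finite superset of `KData`. -/
noncomputable def cover (d : ℕ) (δ : ℝ) (μ : Measure ℝ) (ns ks : ℕ → ℕ) :
    ℕ → Finset ((Fin d → ℝ) × ℝ)
  | 0 => {(fun _ => 0, 1)}
  | l + 1 =>
    ((cover d δ μ ns ks l) ×ˢ
      (Fintype.piFinset fun _ : Fin d => Gfin δ μ (ns (l + 1)) (ks (l + 1)))).image
      (stepFun d (ns (l + 1)))

lemma KData_subset_cover (d : ℕ) (δ : ℝ) (μ : Measure ℝ) (ns ks : ℕ → ℕ) (l : ℕ) :
    ∀ q ∈ KData d δ μ ns ks l, q ∈ cover d δ μ ns ks l := by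
  induction l with
  | zero => intro q hq; simp only [KData, Set.mem_singleton_iff] at hq
            simp [cover, hq]
  | succ l ih =>
    rintro q ⟨p, hp, f, hf, h1, h2⟩
    rw [cover, Finset.mem_image]
    refine ⟨(p, f), Finset.mem_product.2 ⟨ih p hp, Fintype.mem_piFinset.2 fun j => mem_Gfin.2 (hf j)⟩, ?_⟩
    refine Prod.ext ?_ ?_
    · exact h1.symm
    · exact h2.symm

/-- The accumulated generation. -/
def Nsum (ns : ℕ → ℕ) (l : ℕ) : ℕ := ∑ j ∈ Finset.range l, ns (j + 1)

lemma cover_side (d : ℕ) (δ : ℝ) (μ : Measure ℝ) (ns ks : ℕ → ℕ) (l : ℕ) :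
    ∀ q ∈ cover d δ μ ns ks l, q.2 = (1 / 3 : ℝ) ^ (Nsum ns l) := by
  induction l with
  | zero => intro q hq; simp only [cover, Finset.mem_singleton] at hq
            simp [hq, Nsum]
  | succ l ih =>
    intro q hq
    rw [cover, Finset.mem_image] at hq
    obtain ⟨pf, hpf, rfl⟩ := hq
    have hp := ih pf.1 (Finset.mem_product.1 hpf).1
    simp only [stepFun, hp, Nsum, Finset.sum_range_succ]
    rw [pow_add]
    field_simp
    rw [← mul_pow]; norm_num

lemma cover_card (d : ℕ) (δ : ℝ) (μ : Measure ℝ) (ns ks : ℕ → ℕ) (l : ℕ) :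
    (cover d δ μ ns ks l).card ≤
      ∏ j ∈ Finset.range l, (Gfin δ μ (ns (j + 1)) (ks (j + 1))).card ^ d := by
  induction l with
  | zero => simp [cover]
  | succ l ih =>
    rw [cover, Finset.prod_range_succ]
    calc _ ≤ ((cover d δ μ ns ks l) ×ˢ
        (Fintype.piFinset fun _ : Fin d => Gfin δ μ (ns (l + 1)) (ks (l + 1)))).card :=
        Finset.card_image_le
      _ = (cover d δ μ ns ks l).card *
            (Fintype.piFinset fun _ : Fin d => Gfin δ μ (ns (l + 1)) (ks (l + 1))).card :=
        Finset.card_product _ _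
      _ ≤ _ := by
        rw [Fintype.card_piFinset]
        simp only [Finset.prod_const, Finset.card_univ, Fintype.card_fin]
        exact Nat.mul_le_mul_right _ ih

lemma ediam_toEuc_cube (d : ℕ) (p : (Fin d → ℝ) × ℝ) (hs : 0 ≤ p.2) :
    EMetric.diam (toEuc d (cubeOf d p)) ≤ ENNReal.ofReal (Real.sqrt d * p.2) := by
  apply EMetric.diam_le
  rintro x ⟨a, ha, rfl⟩ y ⟨b, hb, rfl⟩
  rw [edist_dist]
  apply ENNReal.ofReal_le_ofReal
  have hab : ∀ i, dist (a i) (b i) ≤ p.2 := by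
    intro i
    have ha' := ha i (Set.mem_univ i)
    have hb' := hb i (Set.mem_univ i)
    rw [Real.dist_eq, abs_sub_le_iff]
    obtain ⟨ha1, ha2⟩ := ha'
    obtain ⟨hb1, hb2⟩ := hb'
    constructor <;> linarith
  have hdist : dist ((MeasurableEquiv.toLp 2 (Fin d → ℝ)) a)
      ((MeasurableEquiv.toLp 2 (Fin d → ℝ)) b) =
      Real.sqrt (∑ i, dist (a i) (b i) ^ 2) := by
    rw [EuclideanSpace.dist_eq]
    rfl
  rw [hdist]
  have : (∑ i, dist (a i) (b i) ^ 2) ≤ (d : ℝ) * p.2 ^ 2 := by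
    calc (∑ i, dist (a i) (b i) ^ 2) ≤ ∑ _i : Fin d, p.2 ^ 2 :=
        Finset.sum_le_sum fun i _ => by
          have := hab i
          have h0 : (0:ℝ) ≤ dist (a i) (b i) := dist_nonneg
          nlinarith
      _ = (d : ℝ) * p.2 ^ 2 := by simp [mul_comm]
  calc Real.sqrt (∑ i, dist (a i) (b i) ^ 2) ≤ Real.sqrt ((d : ℝ) * p.2 ^ 2) :=
      Real.sqrt_le_sqrt this
    _ = Real.sqrt d * p.2 := by
      rw [Real.sqrt_mul (Nat.cast_nonneg d), Real.sqrt_sq hs]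

end AuxHK
namespace AuxHK

open scoped ENNReal

lemma card_le_exp {δ : ℝ} {μ : Measure ℝ} (hδ0 : 0 < δ) (hδ6 : δ ≤ 1/6)
    (hμ : ternarySpec δ μ) {n k : ℕ} (hk : (k : ℝ) = 3 * δ * n) :
    ((Gfin δ μ n k).card : ℝ) ≤ Real.exp ((k : ℝ) * Real.log (1/δ) + 3 * δ * n) := by
  have hδ3 : δ ≤ 1/3 := by linarith
  have h2δ : (0:ℝ) < 1 - 2 * δ := by linarith
  set T : ℝ := δ ^ k * (1 - 2 * δ) ^ (n - k) with hTdef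
  have hTpos : 0 < T := by positivity
  have hcT : ((Gfin δ μ n k).card : ℝ) * T ≤ 1 := Gfin_card_le_real hδ0 hδ3 hμ n k
  set E : ℝ := (k : ℝ) * Real.log (1/δ) + 3 * δ * n with hEdef
  have hexp : Real.exp (-E) ≤ T := by
    have e1 : Real.exp (-E) = δ ^ k * Real.exp (-(3*δ)) ^ n := by
      rw [hEdef, neg_add, Real.exp_add]
      congr 1
      · rw [one_div, Real.log_inv, mul_neg, neg_neg, Real.exp_nat_mul, Real.exp_log hδ0]
      · rw [show -(3 * δ * (n:ℝ)) = (n:ℝ) * (-(3*δ)) by ring, Real.exp_nat_mul]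
    rw [e1]
    have e2 : Real.exp (-(3*δ)) ≤ 1 - 2*δ := by
      have h1 : 1 + 3*δ ≤ Real.exp (3*δ) := by
        have := Real.add_one_le_exp (3*δ); linarith
      have h2 : Real.exp (-(3*δ)) = (Real.exp (3*δ))⁻¹ := by
        rw [Real.exp_neg]
      rw [h2]
      have h3 : (Real.exp (3*δ))⁻¹ ≤ (1 + 3*δ)⁻¹ := by
        apply inv_anti₀ (by linarith) h1
      have h4 : (1 + 3*δ)⁻¹ ≤ 1 - 2*δ := by
        rw [inv_le_iff_one_le_mul₀ (by linarith)]
        nlinarith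
      linarith
    have e3 : Real.exp (-(3*δ)) ^ n ≤ (1 - 2*δ) ^ n :=
      pow_le_pow_left₀ (Real.exp_nonneg _) e2 n
    have e4 : (1 - 2*δ) ^ n ≤ (1 - 2*δ) ^ (n - k) :=
      pow_le_pow_of_le_one h2δ.le (by linarith) (Nat.sub_le n k)
    have hδk : (0:ℝ) ≤ δ ^ k := by positivity
    calc δ ^ k * Real.exp (-(3*δ)) ^ n ≤ δ ^ k * (1 - 2*δ) ^ n := by
          exact mul_le_mul_of_nonneg_left e3 hδk
      _ ≤ δ ^ k * (1 - 2*δ) ^ (n - k) := mul_le_mul_of_nonneg_left e4 hδk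
  -- conclude c ≤ exp E
  have hEexp : 0 < Real.exp (-E) := Real.exp_pos _
  have := mul_le_mul_of_nonneg_left hexp (Nat.cast_nonneg (Gfin δ μ n k).card)
  have h5 : ((Gfin δ μ n k).card : ℝ) * Real.exp (-E) ≤ 1 := le_trans this hcT
  have h6 : Real.exp (-E) * Real.exp E = 1 := by rw [← Real.exp_add]; simp
  nlinarith [Real.exp_pos E]

lemma delta_small {d : ℕ} (hd : 2 ≤ d) {δ : ℝ} (hδ0 : 0 < δ) (hδ : δ ≤ 1/3)
    (hδd : 18 * d * (δ + δ * Real.log (1 / δ)) ≤ Real.log 3) : δ ≤ 1/6 := by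
  have hlog : 0 ≤ Real.log (1/δ) := Real.log_nonneg (by rw [le_div_iff₀ hδ0]; linarith)
  have hlog3 : Real.log 3 ≤ 2 := by
    have := Real.log_le_sub_one_of_pos (show (0:ℝ) < 3 by norm_num)
    linarith
  have hd' : (2:ℝ) ≤ d := by exact_mod_cast hd
  have key : 36 * δ ≤ 18 * d * (δ + δ * Real.log (1 / δ)) := by
    nlinarith [mul_nonneg (by linarith : (0:ℝ) ≤ 18*(d:ℝ)-36) hδ0.le,
      mul_nonneg (by linarith : (0:ℝ) ≤ 18*(d:ℝ)) (mul_nonneg hδ0.le hlog)]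
  linarith

end AuxHK
namespace AuxHK

open scoped ENNReal

lemma total_bound (d : ℕ) (hd : 2 ≤ d) {δ : ℝ} (hδ0 : 0 < δ) (hδ : δ ≤ 1/3)
    (hδd : 18 * d * (δ + δ * Real.log (1 / δ)) ≤ Real.log 3)
    {μ : Measure ℝ} (hμ : ternarySpec δ μ) (n1 k1 : ℕ)
    (hk1' : (k1 : ℝ) = 3 * δ * n1) (l : ℕ) :
    ((cover d δ μ (fun l => l * n1) (fun l => l * k1) l).card : ℝ) *
      (1/3:ℝ) ^ (Nsum (fun l => l * n1) l)
      ≤ Real.exp (-(5/6) * Real.log 3) ^ (Nsum (fun l => l * n1) l) := by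
  have hδ6 : δ ≤ 1/6 := delta_small hd hδ0 hδ hδd
  set ns : ℕ → ℕ := fun l => l * n1 with hns
  set ks : ℕ → ℕ := fun l => l * k1 with hks
  set N : ℕ := Nsum ns l with hN
  have hlog3pos : 0 < Real.log 3 := Real.log_pos (by norm_num)
  -- per-step bound
  have hstep : ∀ j : ℕ, ((Gfin δ μ (ns (j+1)) (ks (j+1))).card : ℝ) ^ d ≤
      Real.exp ((ns (j+1) : ℝ) * Real.log 3 / 6) := by
    intro j
    have hkj : ((ks (j+1) : ℕ) : ℝ) = 3 * δ * (ns (j+1) : ℕ) := by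
      simp only [hns, hks]
      push_cast
      rw [hk1']
      ring
    have h1 : ((Gfin δ μ (ns (j+1)) (ks (j+1))).card : ℝ) ≤
        Real.exp ((ks (j+1) : ℝ) * Real.log (1/δ) + 3 * δ * (ns (j+1))) :=
      card_le_exp hδ0 hδ6 hμ hkj
    have h2 : ((Gfin δ μ (ns (j+1)) (ks (j+1))).card : ℝ) ^ d ≤
        Real.exp ((ks (j+1) : ℝ) * Real.log (1/δ) + 3 * δ * (ns (j+1))) ^ d :=
      pow_le_pow_left₀ (Nat.cast_nonneg _) h1 d
    refine h2.trans ?_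
    rw [← Real.exp_nat_mul]
    apply Real.exp_le_exp.2
    have hnn : (0:ℝ) ≤ (ns (j+1) : ℝ) := Nat.cast_nonneg _
    have hkey := mul_le_mul_of_nonneg_left hδd hnn
    rw [hkj]
    nlinarith [hkey]
  -- product bound
  have hprod : ((cover d δ μ ns ks l).card : ℝ) ≤ Real.exp ((N : ℝ) * Real.log 3 / 6) := by
    have h1 : ((cover d δ μ ns ks l).card : ℝ) ≤
        ((∏ j ∈ Finset.range l, (Gfin δ μ (ns (j+1)) (ks (j+1))).card ^ d : ℕ) : ℝ) := by
      exact_mod_cast cover_card d δ μ ns ks l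
    refine h1.trans ?_
    push_cast
    calc (∏ j ∈ Finset.range l, ((Gfin δ μ (ns (j+1)) (ks (j+1))).card : ℝ) ^ d)
        ≤ ∏ j ∈ Finset.range l, Real.exp ((ns (j+1) : ℝ) * Real.log 3 / 6) :=
          Finset.prod_le_prod (fun j _ => by positivity) (fun j _ => hstep j)
      _ = Real.exp (∑ j ∈ Finset.range l, (ns (j+1) : ℝ) * Real.log 3 / 6) :=
          (Real.exp_sum _ _).symm
      _ = Real.exp ((N : ℝ) * Real.log 3 / 6) := by
        congr 1
        rw [hN, Nsum]
        push_cast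
        rw [Finset.sum_mul, Finset.sum_div]
  -- assemble
  have h13 : (1/3:ℝ) = Real.exp (-(Real.log 3)) := by
    rw [Real.exp_neg, Real.exp_log (by norm_num : (0:ℝ) < 3)]
    norm_num
  calc ((cover d δ μ ns ks l).card : ℝ) * (1/3:ℝ) ^ N
      ≤ Real.exp ((N : ℝ) * Real.log 3 / 6) * (1/3:ℝ) ^ N := by
        apply mul_le_mul_of_nonneg_right hprod (by positivity)
    _ = Real.exp (-(5/6) * Real.log 3) ^ N := by
        rw [h13, ← Real.exp_nat_mul, ← Real.exp_nat_mul, ← Real.exp_add]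
        congr 1
        ring

end AuxHK
/-- With parameters `n_l = l·n₁`, `k_l = l·k₁`, `k₁ = 3δn₁ ≥ 1` and
`18d(δ + δ log(1/δ)) ≤ log 3`, the nested intersection `⋂_{l ≥ 1} K_l` of the iterated
construction has one-dimensional Hausdorff measure zero. -/
theorem hausdorff_inter_bigK_eq_zero (d : ℕ) (hd : 2 ≤ d) (δ : ℝ) (hδ0 : 0 < δ)
    (hδ : δ ≤ 1 / 3) (hδd : 18 * d * (δ + δ * Real.log (1 / δ)) ≤ Real.log 3)
    (μ : Measure ℝ) (hμ : ternarySpec δ μ) (n1 k1 : ℕ) (hk1 : 1 ≤ k1)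
    (hk1' : (k1 : ℝ) = 3 * δ * n1) :
    μH[1] (toEuc d
        (⋂ l ∈ {l : ℕ | 1 ≤ l},
          bigK d δ μ (fun l => l * n1) (fun l => l * k1) l)) = 0 := by
  classical
  set ns : ℕ → ℕ := fun l => l * n1 with hns
  set ks : ℕ → ℕ := fun l => l * k1 with hks
  set s : Set (EuclideanSpace ℝ (Fin d)) :=
    toEuc d (⋂ l ∈ {l : ℕ | 1 ≤ l}, bigK d δ μ ns ks l) with hs
  -- basic facts
  have hn1 : 1 ≤ n1 := by
    rcases Nat.eq_zero_or_pos n1 with h | h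
    · exfalso
      rw [h] at hk1'
      norm_num at hk1'
      omega
    · exact h
  have hNl : ∀ l, l ≤ AuxHK.Nsum ns l := by
    intro l
    calc l = ∑ _j ∈ Finset.range l, 1 := by simp
      _ ≤ AuxHK.Nsum ns l := Finset.sum_le_sum fun j _ => by
          simp only [hns]
          exact Nat.one_le_iff_ne_zero.2 (by positivity)
  set q : ℝ := Real.exp (-(5/6) * Real.log 3) with hq
  have hlog3pos : 0 < Real.log 3 := Real.log_pos (by norm_num)
  have hq0 : 0 ≤ q := Real.exp_nonneg _
  have hq1 : q < 1 := by
    rw [hq, Real.exp_lt_one_iff]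
    nlinarith
  -- the covering data
  set t : ∀ l : ℕ, ↥(AuxHK.cover d δ μ ns ks l) → Set (EuclideanSpace ℝ (Fin d)) :=
    fun l i => toEuc d (cubeOf d i.1) with ht
  set r : ℕ → ENNReal :=
    fun l => ENNReal.ofReal (Real.sqrt d * (1/3:ℝ) ^ (AuxHK.Nsum ns l)) with hr
  have hrtends : Filter.Tendsto r Filter.atTop (nhds 0) := by
    have hreal : Filter.Tendsto (fun l => Real.sqrt d * (1/3:ℝ) ^ (AuxHK.Nsum ns l))
        Filter.atTop (nhds 0) := by
      apply squeeze_zero (fun l => by positivity)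
        (g := fun l => Real.sqrt d * (1/3:ℝ) ^ l)
      · intro l
        apply mul_le_mul_of_nonneg_left _ (Real.sqrt_nonneg _)
        exact pow_le_pow_of_le_one (by norm_num) (by norm_num) (hNl l)
      · rw [show (0:ℝ) = Real.sqrt d * 0 by ring]
        exact (tendsto_pow_atTop_nhds_zero_of_lt_one (by norm_num) (by norm_num)).const_mul _
    have := ENNReal.tendsto_ofReal (f := Filter.atTop) hreal
    simpa [hr] using this
  have hdiam : ∀ l, ∀ i : ↥(AuxHK.cover d δ μ ns ks l), EMetric.diam (t l i) ≤ r l := by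
    intro l i
    have hside := AuxHK.cover_side d δ μ ns ks l i.1 i.2
    have h0 : 0 ≤ (i.1 : (Fin d → ℝ) × ℝ).2 := by rw [hside]; positivity
    have := AuxHK.ediam_toEuc_cube d i.1 h0
    rwa [hside] at this
  have hcover : ∀ l, 1 ≤ l → s ⊆ ⋃ i, t l i := by
    intro l hl
    rintro x ⟨a, ha, rfl⟩
    have hbig : a ∈ bigK d δ μ ns ks l := by
      have := Set.mem_iInter₂.1 ha l hl
      exact this
    rw [bigK] at hbig
    obtain ⟨p, hp, hcube⟩ := Set.mem_iUnion₂.1 hbig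
    refine Set.mem_iUnion.2 ⟨⟨p, AuxHK.KData_subset_cover d δ μ ns ks l p hp⟩, ?_⟩
    exact ⟨a, hcube, rfl⟩
  -- apply the Hausdorff bound
  have hmain := MeasureTheory.Measure.hausdorffMeasure_le_liminf_sum 1 s r hrtends t
    (Filter.Eventually.of_forall hdiam)
    (Filter.eventually_atTop.2 ⟨1, fun l hl => hcover l hl⟩)
  -- bound each sum
  have hsum : ∀ l : ℕ, (∑ i : ↥(AuxHK.cover d δ μ ns ks l), EMetric.diam (t l i) ^ (1:ℝ))
      ≤ ENNReal.ofReal (Real.sqrt d * q ^ l) := by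
    intro l
    have h1 : (∑ i : ↥(AuxHK.cover d δ μ ns ks l), EMetric.diam (t l i) ^ (1:ℝ))
        ≤ ∑ _i : ↥(AuxHK.cover d δ μ ns ks l), r l := by
      apply Finset.sum_le_sum
      intro i _
      rw [ENNReal.rpow_one]
      exact hdiam l i
    refine h1.trans ?_
    rw [Finset.sum_const, Finset.card_univ, Fintype.card_coe, nsmul_eq_mul]
    rw [hr]
    rw [← ENNReal.ofReal_natCast, ← ENNReal.ofReal_mul (Nat.cast_nonneg _)]
    apply ENNReal.ofReal_le_ofReal
    have hB := AuxHK.total_bound d hd hδ0 hδ hδd hμ n1 k1 hk1' l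
    have hqN : q ^ (AuxHK.Nsum ns l) ≤ q ^ l :=
      pow_le_pow_of_le_one hq0 hq1.le (hNl l)
    calc ((AuxHK.cover d δ μ ns ks l).card : ℝ) * (Real.sqrt d * (1/3:ℝ) ^ (AuxHK.Nsum ns l))
        = Real.sqrt d * (((AuxHK.cover d δ μ ns ks l).card : ℝ) * (1/3:ℝ) ^ (AuxHK.Nsum ns l)) := by
          ring
      _ ≤ Real.sqrt d * q ^ (AuxHK.Nsum ns l) :=
          mul_le_mul_of_nonneg_left hB (Real.sqrt_nonneg _)
      _ ≤ Real.sqrt d * q ^ l := mul_le_mul_of_nonneg_left hqN (Real.sqrt_nonneg _)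
  -- conclude
  have hlim : Filter.Tendsto (fun l : ℕ => ENNReal.ofReal (Real.sqrt d * q ^ l))
      Filter.atTop (nhds 0) := by
    have hreal : Filter.Tendsto (fun l : ℕ => Real.sqrt d * q ^ l) Filter.atTop (nhds 0) := by
      rw [show (0:ℝ) = Real.sqrt d * 0 by ring]
      exact (tendsto_pow_atTop_nhds_zero_of_lt_one hq0 hq1).const_mul _
    have := ENNReal.tendsto_ofReal (f := Filter.atTop) hreal
    simpa using this
  have hliminf : Filter.liminf
      (fun l => ∑ i : ↥(AuxHK.cover d δ μ ns ks l), EMetric.diam (t l i) ^ (1:ℝ))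
      Filter.atTop ≤ 0 := by
    calc _ ≤ Filter.liminf (fun l : ℕ => ENNReal.ofReal (Real.sqrt d * q ^ l)) Filter.atTop :=
        Filter.liminf_le_liminf (Filter.Eventually.of_forall hsum)
      _ = 0 := hlim.liminf_eq
  exact le_antisymm (hmain.trans hliminf) zero_le
end
end

section
/- Fix d ≥ 2, δ > 0 with 18d·[δ + δ·log(1/δ)] ≤ log 3, and an integer n_1 such that k_1 := 3δn_1 is an integer with k_1 ≥ 1; set n_l = l·n_1 and k_l = l·k_1. Let Γ be the set of the iterated triadic construction with these parameters and let ν = μ × ⋯ × μ be the d-fold product of the measure μ of the construction. Then ν(Γ) ≥ exp{ − d·Z/(1−Z)^2 } where Z = exp(−2δ²n_1); in particular ν(Γ) > 0. -/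
open MeasureTheory Set

noncomputable section

/-- The set `Γ` of the iterated construction: the skeleton of `[0,1)^d`, together with, for
every `l ≥ 1` and every cube `Q ∈ 𝒦_{l-1}`, the image `A_Q(Γ(n_l, k_l))`, together with the
nested intersection `⋂_{l ≥ 1} K_l`. -/
def GammaFull (d : ℕ) (δ : ℝ) (μ : Measure ℝ) (ns ks : ℕ → ℕ) : Set (Fin d → ℝ) :=
  Sk d (fun _ => Set.Ico (0 : ℝ) 1) ∪
    (⋃ l ∈ {l : ℕ | 1 ≤ l}, ⋃ p ∈ KData d δ μ ns ks (l - 1),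
      (fun x j => p.1 j + p.2 * x j) '' GammaNK d δ μ (ns l) (ks l)) ∪
    ⋂ l ∈ {l : ℕ | 1 ≤ l}, bigK d δ μ ns ks l



lemma ternaryOnes_three_mul_add (m r : ℕ) (hr : r < 3) :
    ternaryOnes (3 * m + r) = ternaryOnes m + (if r = 1 then 1 else 0) := by
  rcases Nat.eq_zero_or_pos (3 * m + r) with h | h
  · have hm : m = 0 := by omega
    have hr0 : r = 0 := by omega
    simp [hm, hr0, ternaryOnes]
  · unfold ternaryOnes
    rw [Nat.digits_def' (by norm_num : 1 < 3) h]
    have h1 : (3 * m + r) % 3 = r := by omega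
    have h2 : (3 * m + r) / 3 = m := by omega
    rw [h1, h2, List.count_cons]
    simp [beq_iff_eq]

lemma ternaryOnes_le (n : ℕ) : ∀ i, i < 3 ^ n → ternaryOnes i ≤ n := by
  induction n with
  | zero => intro i hi; interval_cases i; simp [ternaryOnes]
  | succ n ih =>
    intro i hi
    have hd : i = 3 * (i / 3) + i % 3 := by omega
    have h3 : i / 3 < 3 ^ n := by
      rw [Nat.div_lt_iff_lt_mul (by norm_num)]
      calc i < 3 ^ (n+1) := hi
        _ = 3 ^ n * 3 := by ring
    calc ternaryOnes i = ternaryOnes (3 * (i/3) + i % 3) := by rw [← hd]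
      _ = ternaryOnes (i/3) + (if i % 3 = 1 then 1 else 0) :=
          ternaryOnes_three_mul_add _ _ (Nat.mod_lt _ (by norm_num))
      _ ≤ n + 1 := by have := ih _ h3; split <;> omega

lemma ternaryOnes_mul_pow_add (n : ℕ) : ∀ i0 i, i < 3 ^ n →
    ternaryOnes (i0 * 3 ^ n + i) = ternaryOnes i0 + ternaryOnes i := by
  induction n with
  | zero => intro i0 i hi; interval_cases i; simp [ternaryOnes]
  | succ n ih =>
    intro i0 i hi
    have key : i0 * 3 ^ (n+1) + i = 3 * (i0 * 3 ^ n + i / 3) + i % 3 := by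
      rw [pow_succ]
      conv_lhs => rw [show i = 3 * (i/3) + i % 3 by omega]
      ring
    have h3 : i / 3 < 3 ^ n := by
      rw [Nat.div_lt_iff_lt_mul (by norm_num)]
      calc i < 3 ^ (n+1) := hi
        _ = 3 ^ n * 3 := by ring
    have hi' : ternaryOnes i = ternaryOnes (i/3) + (if i % 3 = 1 then 1 else 0) := by
      conv_lhs => rw [show i = 3 * (i/3) + i % 3 by omega]
      exact ternaryOnes_three_mul_add _ _ (Nat.mod_lt _ (by norm_num))
    rw [key, ternaryOnes_three_mul_add _ _ (Nat.mod_lt _ (by norm_num)), ih i0 (i/3) h3, hi']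
    omega

lemma sum_w (x y : ℝ) (n : ℕ) :
    ∑ i ∈ Finset.range (3 ^ n), x ^ (n - ternaryOnes i) * y ^ ternaryOnes i
      = (2 * x + y) ^ n := by
  induction n with
  | zero => simp [ternaryOnes]
  | succ n ih =>
    have hre : ∑ p ∈ Finset.range (3 ^ n) ×ˢ Finset.range 3,
            x ^ (n + 1 - ternaryOnes (3 * p.1 + p.2)) * y ^ ternaryOnes (3 * p.1 + p.2)
          = ∑ i ∈ Finset.range (3 ^ (n+1)),
              x ^ (n + 1 - ternaryOnes i) * y ^ ternaryOnes i := by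
      refine Finset.sum_nbij' (fun p => 3 * p.1 + p.2) (fun i => (i / 3, i % 3)) ?_ ?_ ?_ ?_ ?_
      · intro p hp
        simp only [Finset.mem_product, Finset.mem_range] at hp
        simp only [Finset.mem_range, pow_succ]; nlinarith [hp.1, hp.2]
      · intro i hi
        simp only [Finset.mem_range, pow_succ] at hi
        simp only [Finset.mem_product, Finset.mem_range]
        constructor
        · rw [Nat.div_lt_iff_lt_mul (by norm_num)]; omega
        · omega
      · intro p hp
        simp only [Finset.mem_product, Finset.mem_range] at hp
        simp only [Prod.ext_iff]; omega
      · intro i _; simp only; omega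
      · intro p _; rfl
    rw [← hre, Finset.sum_product]
    have hterm : ∀ q ∈ Finset.range (3 ^ n),
        ∑ r ∈ Finset.range 3, x ^ (n + 1 - ternaryOnes (3 * q + r)) * y ^ ternaryOnes (3 * q + r)
        = (2 * x + y) * (x ^ (n - ternaryOnes q) * y ^ ternaryOnes q) := by
      intro q hq
      simp only [Finset.mem_range] at hq
      have hoq := ternaryOnes_le n q hq
      rw [Finset.sum_range_succ, Finset.sum_range_succ, Finset.sum_range_one]
      rw [ternaryOnes_three_mul_add q 0 (by norm_num), ternaryOnes_three_mul_add q 1 (by norm_num),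
        ternaryOnes_three_mul_add q 2 (by norm_num)]
      norm_num
      rw [show n + 1 - ternaryOnes q = (n - ternaryOnes q) + 1 by omega,
        show n + 1 - (ternaryOnes q + 1) = n - ternaryOnes q by omega]
      ring
    rw [Finset.sum_congr rfl hterm, ← Finset.mul_sum, ih, pow_succ]
    ring

lemma log_two_ge : (11:ℝ)/16 ≤ Real.log 2 := by
  rw [Real.le_log_iff_exp_le (by norm_num)]
  have h : Real.exp (11/16 : ℝ) ^ (16:ℕ) ≤ (2:ℝ) ^ (16:ℕ) := by
    have e : Real.exp (11/16:ℝ) ^ (16:ℕ) = Real.exp 11 := by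
      rw [← Real.exp_nat_mul]; norm_num
    have e2 : Real.exp (11:ℝ) = Real.exp 1 ^ (11:ℕ) := by
      rw [← Real.exp_nat_mul]; norm_num
    rw [e, e2]
    calc Real.exp 1 ^ (11:ℕ) ≤ (2.7182818286:ℝ) ^ (11:ℕ) :=
          pow_le_pow_left₀ (Real.exp_pos 1).le Real.exp_one_lt_d9.le 11
      _ ≤ (2:ℝ)^(16:ℕ) := by norm_num
  exact le_of_pow_le_pow_left₀ (by norm_num) (by norm_num) h

lemma exp_two_le : Real.exp 2 ≤ 7.39 := by
  have e2 : Real.exp (2:ℝ) = Real.exp 1 ^ (2:ℕ) := by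
    rw [← Real.exp_nat_mul]; norm_num
  rw [e2]
  calc Real.exp 1 ^ (2:ℕ) ≤ (2.7182818286:ℝ) ^ (2:ℕ) :=
        pow_le_pow_left₀ (Real.exp_pos 1).le Real.exp_one_lt_d9.le 2
    _ ≤ 7.39 := by norm_num

lemma delta_small (d : ℕ) (hd : 2 ≤ d) (δ : ℝ) (hδ0 : 0 < δ) (hδ : δ ≤ 1/3)
    (hδd : 18 * d * (δ + δ * Real.log (1 / δ)) ≤ Real.log 3) : δ ≤ 1/32 := by
  have hlog3 : Real.log 3 ≤ 2 := by
    rw [Real.log_le_iff_le_exp (by norm_num)]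
    linarith [Real.add_one_le_exp (2:ℝ)]
  have hl0 : 0 ≤ Real.log (1/δ) := Real.log_nonneg (by rw [le_div_iff₀ hδ0]; linarith)
  have hB : 0 ≤ δ + δ * Real.log (1/δ) := by positivity
  have h36 : 36 * (δ + δ * Real.log (1/δ)) ≤ 2 := by
    have h2d : (36:ℝ) ≤ 18 * d := by
      have : (2:ℝ) ≤ (d:ℝ) := by exact_mod_cast hd
      linarith
    nlinarith
  have hδ18 : δ ≤ 1/18 := by nlinarith
  have hl2 : (2:ℝ) ≤ Real.log (1/δ) := by
    rw [Real.le_log_iff_exp_le (by positivity)]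
    calc Real.exp 2 ≤ 7.39 := exp_two_le
      _ ≤ 18 := by norm_num
      _ ≤ 1/δ := by rw [le_div_iff₀ hδ0]; linarith
  nlinarith

lemma bad_sum_le (δ : ℝ) (hδ0 : 0 < δ) (hδ : δ ≤ 1/3) (hδs : δ ≤ 1/32) (n k : ℕ)
    (hk : (k:ℝ) = 3 * δ * n) :
    ∑ i ∈ (Finset.range (3^n)).filter (fun i => ternaryOnes i < n - k),
      δ ^ (n - ternaryOnes i) * (1-2*δ) ^ ternaryOnes i ≤ Real.exp (-2*δ^2*n) := by
  have h12 : (0:ℝ) ≤ 1 - 2*δ := by linarith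
  have step1 : ∑ i ∈ (Finset.range (3^n)).filter (fun i => ternaryOnes i < n - k),
      δ ^ (n - ternaryOnes i) * (1-2*δ) ^ ternaryOnes i
      ≤ (1/2^k) * ∑ i ∈ Finset.range (3^n),
          (2*δ) ^ (n - ternaryOnes i) * (1-2*δ) ^ ternaryOnes i := by
    rw [Finset.mul_sum]
    refine (Finset.sum_le_sum ?_).trans
      (Finset.sum_le_sum_of_subset_of_nonneg (Finset.filter_subset _ _) ?_)
    · intro i hi
      obtain ⟨hi1, hi2⟩ := Finset.mem_filter.mp hi
      rw [Finset.mem_range] at hi1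
      have hbad : k + 1 ≤ n - ternaryOnes i := by omega
      have h2 : (2:ℝ)^k ≤ 2 ^ (n - ternaryOnes i) :=
        pow_le_pow_right₀ (by norm_num) (by omega)
      rw [mul_pow]
      rw [div_mul_eq_mul_div, one_mul, le_div_iff₀ (by positivity)]
      calc δ ^ (n - ternaryOnes i) * (1 - 2*δ) ^ ternaryOnes i * 2 ^ k
          ≤ δ ^ (n - ternaryOnes i) * (1 - 2*δ) ^ ternaryOnes i * 2 ^ (n - ternaryOnes i) := by
            have h0 : (0:ℝ) ≤ δ ^ (n - ternaryOnes i) * (1 - 2*δ) ^ ternaryOnes i := by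
              positivity
            exact mul_le_mul_of_nonneg_left h2 h0
        _ = 2 ^ (n - ternaryOnes i) * δ ^ (n - ternaryOnes i) * (1 - 2*δ) ^ ternaryOnes i := by
            ring
    · intro i _ _; positivity
  rw [sum_w (2*δ) (1-2*δ) n] at step1
  have step2 : (1/2^k) * (2*(2*δ) + (1-2*δ))^n ≤ Real.exp (-2*δ^2*n) := by
    have e1 : (2*(2*δ) + (1-2*δ)) = 1 + 2*δ := by ring
    have hb : (1+2*δ) ≤ Real.exp (2*δ) := by linarith [Real.add_one_le_exp (2*δ)]
    have e2 : (1+2*δ)^n ≤ Real.exp (2*δ*(n:ℝ)) := by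
      calc (1+2*δ)^n ≤ Real.exp (2*δ) ^ n := pow_le_pow_left₀ (by linarith) hb n
        _ = Real.exp ((n:ℝ)*(2*δ)) := by rw [Real.exp_nat_mul]
        _ = Real.exp (2*δ*(n:ℝ)) := by ring_nf
    have e3 : (2:ℝ)^k = Real.exp ((k:ℝ) * Real.log 2) := by
      rw [Real.exp_nat_mul, Real.exp_log (by norm_num)]
    rw [e1, e3]
    rw [div_mul_eq_mul_div, one_mul, div_le_iff₀ (Real.exp_pos _)]
    rw [← Real.exp_add]
    refine e2.trans (Real.exp_le_exp.mpr ?_)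
    rw [hk]
    have hlog := log_two_ge
    nlinarith [mul_nonneg (mul_nonneg hδ0.le (Nat.cast_nonneg n : (0:ℝ) ≤ n))
      (by linarith : (0:ℝ) ≤ 3*Real.log 2 - 2 - 2*δ)]
  linarith

lemma good_weight (δ : ℝ) (hδ0 : 0 < δ) (hδ : δ ≤ 1/3) (n k i : ℕ) (hkn : k ≤ n)
    (hi : i < 3 ^ n) (ho : n - k ≤ ternaryOnes i) :
    δ ^ k * (1 - 2*δ) ^ (n - k) ≤ δ ^ (n - ternaryOnes i) * (1-2*δ) ^ ternaryOnes i := by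
  have h12 : δ ≤ 1 - 2*δ := by linarith
  have hon := ternaryOnes_le n i hi
  set o := ternaryOnes i with hodef
  set t := k - (n - o) with htdef
  have E1 : δ^k = δ^(n-o) * δ^t := by rw [← pow_add]; congr 1; omega
  have E2 : (1-2*δ)^o = (1-2*δ)^(n-k) * (1-2*δ)^t := by rw [← pow_add]; congr 1; omega
  rw [E1, E2]
  have h0a : (0:ℝ) ≤ δ^(n-o) := pow_nonneg hδ0.le _
  have h0b : (0:ℝ) ≤ (1-2*δ)^(n-k) := pow_nonneg (by linarith) _
  have hp : δ^t ≤ (1-2*δ)^t := pow_le_pow_left₀ hδ0.le h12 t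
  have key := mul_le_mul_of_nonneg_left (mul_le_mul_of_nonneg_right hp h0b) h0a
  linear_combination key

lemma one_sub_ge_exp (Z x : ℝ) (hZ0 : 0 < Z) (hZ1 : Z < 1) (hx0 : 0 < x) (hxZ : x ≤ Z) :
    Real.exp (-(x/(1-Z))) ≤ 1 - x := by
  have h1Z : 0 < 1 - Z := by linarith
  have hE := Real.add_one_le_exp (x/(1-Z))
  have hx1 : x < 1 := lt_of_le_of_lt hxZ hZ1
  have h2 : 1 ≤ (1-x) * (x/(1-Z) + 1) := by
    have expand : (1-x) * (x/(1-Z) + 1) - 1 = x * (Z - x) / (1-Z) := by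
      field_simp; ring
    have hnn : 0 ≤ x * (Z - x) / (1-Z) :=
      div_nonneg (mul_nonneg hx0.le (by linarith)) h1Z.le
    linarith
  have key : 1 ≤ (1-x) * Real.exp (x/(1-Z)) :=
    h2.trans (mul_le_mul_of_nonneg_left hE (by linarith))
  rw [Real.exp_neg, inv_le_iff_one_le_mul₀ (Real.exp_pos _)]
  exact key

lemma prod_one_sub_ge (Z : ℝ) (hZ0 : 0 < Z) (hZ1 : Z < 1) (l : ℕ) :
    Real.exp (-(Z/(1-Z)^2)) ≤ ∏ m ∈ Finset.range l, (1 - Z^(m+1)) := by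
  have h1Z : 0 < 1 - Z := by linarith
  have hstep : ∀ m ∈ Finset.range l, Real.exp (-(Z^(m+1)/(1-Z))) ≤ 1 - Z^(m+1) := by
    intro m _
    refine one_sub_ge_exp Z (Z^(m+1)) hZ0 hZ1 (by positivity) ?_
    calc Z^(m+1) ≤ Z^1 := pow_le_pow_of_le_one hZ0.le hZ1.le (by omega)
      _ = Z := pow_one Z
  have hsum : ∑ m ∈ Finset.range l, Z^(m+1) ≤ Z/(1-Z) := by
    have geo : (∑ m ∈ Finset.range l, Z^m) * (1 - Z) = 1 - Z^l := by
      have h := geom_sum_mul Z l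
      nlinarith [h]
    have hle : ∑ m ∈ Finset.range l, Z^m ≤ 1/(1-Z) := by
      rw [le_div_iff₀ h1Z]
      nlinarith [pow_nonneg hZ0.le l]
    have e : ∑ m ∈ Finset.range l, Z^(m+1) = Z * ∑ m ∈ Finset.range l, Z^m := by
      rw [Finset.mul_sum]
      exact Finset.sum_congr rfl fun m _ => by ring
    rw [e, div_eq_mul_one_div Z (1-Z)]
    exact mul_le_mul_of_nonneg_left hle hZ0.le
  have esum : (∑ m ∈ Finset.range l, -(Z ^ (m + 1) / (1 - Z)))
      = -((∑ m ∈ Finset.range l, Z ^ (m + 1)) / (1 - Z)) := by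
    simp [Finset.sum_div, neg_div]
  calc Real.exp (-(Z/(1-Z)^2)) ≤ Real.exp (∑ m ∈ Finset.range l, -(Z^(m+1)/(1-Z))) := by
        rw [Real.exp_le_exp, esum, neg_le_neg_iff]
        calc (∑ m ∈ Finset.range l, Z ^ (m + 1)) / (1 - Z) ≤ (Z/(1-Z))/(1-Z) := by
              gcongr
          _ = Z/(1-Z)^2 := by rw [div_div, sq]
    _ = ∏ m ∈ Finset.range l, Real.exp (-(Z^(m+1)/(1-Z))) := Real.exp_sum _ _
    _ ≤ ∏ m ∈ Finset.range l, (1 - Z^(m+1)) :=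
        Finset.prod_le_prod (fun m _ => (Real.exp_pos _).le) hstep

/-! ### Auxiliary constructions -/

open Classical in
/-- Heavy indices as a `Finset`. -/
def goodF (δ : ℝ) (μ : Measure ℝ) (n k : ℕ) : Finset ℕ :=
  (Finset.range (3^n)).filter (fun i => i ∈ goodIdx δ μ n k)

lemma mem_goodF {δ : ℝ} {μ : Measure ℝ} {n k i : ℕ} :
    i ∈ goodF δ μ n k ↔ i ∈ goodIdx δ μ n k := by
  simp only [goodF, Finset.mem_filter, Finset.mem_range, goodIdx, Set.mem_setOf_eq]
  tauto

lemma goodF_lt {δ : ℝ} {μ : Measure ℝ} {n k i : ℕ} (h : i ∈ goodF δ μ n k) : i < 3 ^ n :=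
  (mem_goodF.mp h).1

/-- Cumulative generation count. -/
def NN (n1 : ℕ) : ℕ → ℕ
  | 0 => 0
  | l+1 => NN n1 l + (l+1)*n1

/-- Indices of the surviving triadic intervals of the 1-dimensional iterated construction. -/
def GFin (δ : ℝ) (μ : Measure ℝ) (n1 k1 : ℕ) : ℕ → Finset ℕ
  | 0 => {0}
  | l+1 => ((GFin δ μ n1 k1 l) ×ˢ goodF δ μ ((l+1)*n1) ((l+1)*k1)).image
             (fun p => p.1 * 3 ^ ((l+1)*n1) + p.2)

lemma GFin_lt (δ : ℝ) (μ : Measure ℝ) (n1 k1 : ℕ) :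
    ∀ l, ∀ i ∈ GFin δ μ n1 k1 l, i < 3 ^ NN n1 l := by
  intro l
  induction l with
  | zero => intro i hi; simp only [GFin, Finset.mem_singleton] at hi; simp [hi, NN]
  | succ l ih =>
    intro i hi
    simp only [GFin, Finset.mem_image, Finset.mem_product] at hi
    obtain ⟨p, ⟨hp1, hp2⟩, rfl⟩ := hi
    have ha := ih p.1 hp1
    have hb := goodF_lt hp2
    have : NN n1 (l+1) = NN n1 l + (l+1)*n1 := rfl
    rw [this, pow_add]
    calc p.1 * 3 ^ ((l+1)*n1) + p.2 < p.1 * 3 ^ ((l+1)*n1) + 3 ^ ((l+1)*n1) := by omega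
      _ = (p.1 + 1) * 3 ^ ((l+1)*n1) := by ring
      _ ≤ 3 ^ NN n1 l * 3 ^ ((l+1)*n1) := Nat.mul_le_mul_right _ (by omega)

lemma mu_triIco {δ : ℝ} {μ : Measure ℝ} (hμ : ternarySpec δ μ) (n i : ℕ) (hi : i < 3^n) :
    μ (triIco n i) = ENNReal.ofReal (δ ^ (n - ternaryOnes i) * (1 - 2*δ) ^ ternaryOnes i) := by
  have h := hμ 0 n i hi
  simpa [triIco] using h

lemma triIco_disjoint (N : ℕ) {i i' : ℕ} (h : i ≠ i') :
    Disjoint (triIco N i) (triIco N i') := by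
  rw [triIco, triIco, Set.Ico_disjoint_Ico]
  have h3 : (0:ℝ) < 3 ^ N := by positivity
  rcases Nat.lt_or_ge i i' with hlt | hge
  · have hc : ((i:ℝ)+1) ≤ (i':ℝ) := by exact_mod_cast hlt
    refine (min_le_left _ _).trans (le_trans ?_ (le_max_right _ _))
    gcongr
  · have hlt : i' < i := by omega
    have hc : ((i':ℝ)+1) ≤ (i:ℝ) := by exact_mod_cast hlt
    refine (min_le_right _ _).trans (le_trans ?_ (le_max_left _ _))
    gcongr

lemma triIco_subset (N n a b : ℕ) (hb : b < 3^n) :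
    triIco (N + n) (a * 3^n + b) ⊆ triIco N a := by
  unfold triIco
  have h1 : (0:ℝ) < 3 ^ N := by positivity
  have h2 : (0:ℝ) < 3 ^ n := by positivity
  have hbr : (b:ℝ) + 1 ≤ 3 ^ n := by exact_mod_cast Nat.succ_le_of_lt hb
  apply Set.Ico_subset_Ico
  · rw [pow_add, div_le_div_iff₀ h1 (by positivity)]
    push_cast
    nlinarith [(Nat.cast_nonneg b : (0:ℝ) ≤ b), (Nat.cast_nonneg a : (0:ℝ) ≤ a)]
  · rw [pow_add, div_le_div_iff₀ (by positivity) h1]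
    push_cast
    nlinarith [(Nat.cast_nonneg a : (0:ℝ) ≤ a)]

lemma Ico_corner (N a : ℕ) :
    Set.Ico ((a:ℝ)/3^N) ((a:ℝ)/3^N + 1/3^N) = triIco N a := by
  unfold triIco
  rw [add_div]

/-- The weight of a triadic interval. -/
def wgt (δ : ℝ) (n i : ℕ) : ℝ := δ ^ (n - ternaryOnes i) * (1 - 2*δ) ^ ternaryOnes i

def Gsum (δ : ℝ) (μ : Measure ℝ) (n k : ℕ) : ℝ := ∑ i ∈ goodF δ μ n k, wgt δ n i

def Wsum (δ : ℝ) (μ : Measure ℝ) (n1 k1 l : ℕ) : ℝ :=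
  ∑ i ∈ GFin δ μ n1 k1 l, wgt δ (NN n1 l) i

lemma wgt_nonneg {δ : ℝ} (hδ0 : 0 < δ) (hδ : δ ≤ 1/3) (n i : ℕ) : 0 ≤ wgt δ n i := by
  have : (0:ℝ) ≤ 1 - 2*δ := by linarith
  unfold wgt
  positivity

lemma Wsum_zero (δ : ℝ) (μ : Measure ℝ) (n1 k1 : ℕ) : Wsum δ μ n1 k1 0 = 1 := by
  simp [Wsum, GFin, NN, wgt, ternaryOnes]

lemma Wsum_succ (δ : ℝ) (μ : Measure ℝ) (n1 k1 l : ℕ) :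
    Wsum δ μ n1 k1 (l+1) = Wsum δ μ n1 k1 l * Gsum δ μ ((l+1)*n1) ((l+1)*k1) := by
  have hNN : NN n1 (l+1) = NN n1 l + (l+1)*n1 := rfl
  have himg : GFin δ μ n1 k1 (l+1)
      = ((GFin δ μ n1 k1 l) ×ˢ goodF δ μ ((l+1)*n1) ((l+1)*k1)).image
          (fun p => p.1 * 3 ^ ((l+1)*n1) + p.2) := rfl
  have h3n : 0 < 3 ^ ((l+1)*n1) := Nat.pow_pos (by norm_num)
  unfold Wsum
  rw [himg, Finset.sum_image ?inj]
  case inj =>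
    intro p hp q hq heq
    simp only [Finset.coe_product, Set.mem_prod, Finset.mem_coe, Finset.mem_product] at hp hq
    have hb := goodF_lt hp.2
    have hb' := goodF_lt hq.2
    have e1 : ∀ x y : ℕ, y < 3 ^ ((l+1)*n1) → (x * 3 ^ ((l+1)*n1) + y) / 3 ^ ((l+1)*n1) = x := by
      intro x y hy
      rw [mul_comm x (3 ^ ((l+1)*n1)), Nat.mul_add_div h3n, Nat.div_eq_of_lt hy]
      omega
    have h1 : p.1 = q.1 := by
      have := congrArg (· / 3 ^ ((l+1)*n1)) heq
      simpa [e1 _ _ hb, e1 _ _ hb'] using this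
    have h2 : p.2 = q.2 := by
      beta_reduce at heq
      rw [h1] at heq
      exact Nat.add_left_cancel heq
    exact Prod.ext h1 h2
  rw [Finset.sum_product, hNN]
  have hterm : ∀ a ∈ GFin δ μ n1 k1 l, ∀ b ∈ goodF δ μ ((l+1)*n1) ((l+1)*k1),
      wgt δ (NN n1 l + (l+1)*n1) (a * 3 ^ ((l+1)*n1) + b)
        = wgt δ (NN n1 l) a * wgt δ ((l+1)*n1) b := by
    intro a ha b hb
    have hb3 := goodF_lt hb
    have ha3 := GFin_lt δ μ n1 k1 l a ha
    have hoa := ternaryOnes_le _ _ ha3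
    have hob := ternaryOnes_le _ _ hb3
    unfold wgt
    rw [ternaryOnes_mul_pow_add _ a b hb3,
      show NN n1 l + (l+1)*n1 - (ternaryOnes a + ternaryOnes b)
        = (NN n1 l - ternaryOnes a) + ((l+1)*n1 - ternaryOnes b) by omega,
      pow_add, pow_add]
    ring
  calc ∑ a ∈ GFin δ μ n1 k1 l, ∑ b ∈ goodF δ μ ((l+1)*n1) ((l+1)*k1),
        wgt δ (NN n1 l + (l+1)*n1) (a * 3 ^ ((l+1)*n1) + b)
      = ∑ a ∈ GFin δ μ n1 k1 l, ∑ b ∈ goodF δ μ ((l+1)*n1) ((l+1)*k1),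
          wgt δ (NN n1 l) a * wgt δ ((l+1)*n1) b :=
        Finset.sum_congr rfl fun a ha => Finset.sum_congr rfl fun b hb => hterm a ha b hb
    _ = Wsum δ μ n1 k1 l * Gsum δ μ ((l+1)*n1) ((l+1)*k1) :=
        (Finset.sum_mul_sum _ _ _ _).symm

lemma Gsum_ge {δ : ℝ} (hδ0 : 0 < δ) (hδ : δ ≤ 1/3) (hδs : δ ≤ 1/32) {μ : Measure ℝ}
    (hμ : ternarySpec δ μ) (n k : ℕ) (hk : (k:ℝ) = 3*δ*n) :
    1 - Real.exp (-2*δ^2*n) ≤ Gsum δ μ n k := by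
  have hkn : k ≤ n := by
    have h : (k:ℝ) ≤ (n:ℝ) := by rw [hk]; nlinarith [(Nat.cast_nonneg n : (0:ℝ) ≤ n)]
    exact_mod_cast h
  have hsub : (Finset.range (3^n)).filter (fun i => ¬ (ternaryOnes i < n - k))
      ⊆ goodF δ μ n k := by
    intro i hi
    obtain ⟨h1, h2⟩ := Finset.mem_filter.mp hi
    rw [Finset.mem_range] at h1
    rw [mem_goodF]
    refine ⟨h1, ?_⟩
    rw [mu_triIco hμ n i h1]
    exact ENNReal.ofReal_le_ofReal (good_weight δ hδ0 hδ n k i hkn h1 (not_lt.mp h2))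
  have h1 : ∑ i ∈ (Finset.range (3^n)).filter (fun i => ¬ (ternaryOnes i < n - k)), wgt δ n i
      ≤ Gsum δ μ n k :=
    Finset.sum_le_sum_of_subset_of_nonneg hsub (fun i _ _ => wgt_nonneg hδ0 hδ n i)
  have htot : ∑ i ∈ Finset.range (3^n), wgt δ n i = 1 := by
    unfold wgt
    rw [sum_w δ (1-2*δ) n]
    norm_num
  have hsplit := Finset.sum_filter_add_sum_filter_not (Finset.range (3^n))
    (fun i => ternaryOnes i < n - k) (fun i => wgt δ n i)
  have hbad := bad_sum_le δ hδ0 hδ hδs n k hk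
  unfold wgt at h1 hsplit htot
  linarith

lemma Wsum_eq_prod (δ : ℝ) (μ : Measure ℝ) (n1 k1 : ℕ) (l : ℕ) :
    Wsum δ μ n1 k1 l = ∏ m ∈ Finset.range l, Gsum δ μ ((m+1)*n1) ((m+1)*k1) := by
  induction l with
  | zero => simp [Wsum_zero]
  | succ l ih => rw [Wsum_succ, ih, Finset.prod_range_succ]

lemma kdata_iff (d : ℕ) (δ : ℝ) (μ : Measure ℝ) (n1 k1 : ℕ) :
    ∀ (l : ℕ) (p : (Fin d → ℝ) × ℝ),
    p ∈ KData d δ μ (fun l => l * n1) (fun l => l * k1) l ↔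
      ((∃ g : Fin d → ℕ, (∀ j, g j ∈ GFin δ μ n1 k1 l) ∧
        p.1 = fun j => (g j : ℝ) / 3 ^ NN n1 l) ∧ p.2 = 1 / 3 ^ NN n1 l) := by
  intro l
  induction l with
  | zero =>
    intro p
    simp only [KData, Set.mem_singleton_iff]
    have hNN : NN n1 0 = 0 := rfl
    rw [hNN]
    constructor
    · rintro rfl
      exact ⟨⟨fun _ => 0, fun j => by simp [GFin], by funext j; simp⟩, by simp⟩
    · rintro ⟨⟨g, hg, h1⟩, h2⟩
      have hg0 : ∀ j, g j = 0 := fun j => by simpa [GFin] using hg j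
      rw [Prod.ext_iff]
      constructor
      · rw [h1]; funext j; simp [hg0 j]
      · rw [h2]; norm_num
  | succ l ih =>
    intro p
    simp only [KData, Set.mem_setOf_eq]
    have hNN : NN n1 (l+1) = NN n1 l + (l+1)*n1 := rfl
    constructor
    · rintro ⟨q, hq, f, hf, h1, h2⟩
      obtain ⟨⟨g, hg, hq1⟩, hq2⟩ := (ih q).mp hq
      refine ⟨⟨fun j => g j * 3 ^ ((l+1)*n1) + f j, ?_, ?_⟩, ?_⟩
      · intro j
        show _ ∈ GFin δ μ n1 k1 (l+1)
        simp only [GFin, Finset.mem_image]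
        exact ⟨(g j, f j), Finset.mem_product.mpr ⟨hg j, mem_goodF.mpr (hf j)⟩, rfl⟩
      · funext j
        simp only [h1, hq1, hq2, hNN, pow_add]
        push_cast
        have h3a : ((3:ℝ) ^ (NN n1 l)) ≠ 0 := by positivity
        have h3b : ((3:ℝ) ^ ((l+1)*n1)) ≠ 0 := by positivity
        field_simp
      · rw [h2, hq2, hNN, pow_add]
        have h3a : ((3:ℝ) ^ (NN n1 l)) ≠ 0 := by positivity
        have h3b : ((3:ℝ) ^ ((l+1)*n1)) ≠ 0 := by positivity
        field_simp
    · rintro ⟨⟨g', hg', h1⟩, h2⟩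
      have hmem : ∀ j, ∃ ab : ℕ × ℕ,
          (ab.1 ∈ GFin δ μ n1 k1 l ∧ ab.2 ∈ goodF δ μ ((l+1)*n1) ((l+1)*k1)) ∧
          g' j = ab.1 * 3 ^ ((l+1)*n1) + ab.2 := by
        intro j
        have h := hg' j
        simp only [GFin, Finset.mem_image, Finset.mem_product] at h
        obtain ⟨ab, hab, heq⟩ := h
        exact ⟨ab, hab, heq.symm⟩
      choose ab hab hgeq using hmem
      refine ⟨(fun j => ((ab j).1 : ℝ) / 3 ^ NN n1 l, 1 / 3 ^ NN n1 l),
        (ih _).mpr ⟨⟨fun j => (ab j).1, fun j => (hab j).1, rfl⟩, rfl⟩,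
        fun j => (ab j).2, fun j => mem_goodF.mp (hab j).2, ?_, ?_⟩
      · funext j
        simp only [h1, hgeq j, hNN, pow_add]
        push_cast
        have h3a : ((3:ℝ) ^ (NN n1 l)) ≠ 0 := by positivity
        have h3b : ((3:ℝ) ^ ((l+1)*n1)) ≠ 0 := by positivity
        field_simp
      · rw [h2, hNN, pow_add]
        have h3a : ((3:ℝ) ^ (NN n1 l)) ≠ 0 := by positivity
        have h3b : ((3:ℝ) ^ ((l+1)*n1)) ≠ 0 := by positivity
        field_simp

lemma bigK_eq (d : ℕ) (δ : ℝ) (μ : Measure ℝ) (n1 k1 l : ℕ) :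
    bigK d δ μ (fun l => l * n1) (fun l => l * k1) l
      = Set.pi Set.univ (fun _ : Fin d => ⋃ i ∈ GFin δ μ n1 k1 l, triIco (NN n1 l) i) := by
  ext x
  simp only [bigK, Set.mem_iUnion, exists_prop]
  rw [Set.mem_pi]
  simp only [Set.mem_univ, true_implies]
  constructor
  · rintro ⟨p, hp, hx⟩
    obtain ⟨⟨g, hg, h1⟩, h2⟩ := (kdata_iff d δ μ n1 k1 l p).mp hp
    intro j
    rw [cubeOf, Set.mem_pi] at hx
    have hxj := hx j (Set.mem_univ j)
    simp only [h1, h2] at hxj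
    rw [Ico_corner] at hxj
    exact Set.mem_iUnion₂.mpr ⟨g j, hg j, hxj⟩
  · intro hx
    choose g hg hxg using fun j => Set.mem_iUnion₂.mp (hx j)
    refine ⟨(fun j => (g j : ℝ) / 3 ^ NN n1 l, 1 / 3 ^ NN n1 l),
      (kdata_iff d δ μ n1 k1 l _).mpr ⟨⟨g, hg, rfl⟩, rfl⟩, ?_⟩
    rw [cubeOf, Set.mem_pi]
    intro j _
    rw [Ico_corner]
    exact hxg j

/-- With parameters `n_l = l·n₁`, `k_l = l·k₁`, `k₁ = 3δn₁ ≥ 1` and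
`18d(δ + δ log(1/δ)) ≤ log 3`, the `d`-fold product `ν = μ × ⋯ × μ` gives the set `Γ` of the
iterated construction mass `ν(Γ) ≥ exp(-dZ/(1-Z)²)` where `Z = exp(-2δ²n₁)`;
in particular `ν(Γ) > 0`. -/
theorem measure_GammaFull_ge (d : ℕ) (hd : 2 ≤ d) (δ : ℝ) (hδ0 : 0 < δ)
    (hδ : δ ≤ 1 / 3) (hδd : 18 * d * (δ + δ * Real.log (1 / δ)) ≤ Real.log 3)
    (μ : Measure ℝ) (hμ : ternarySpec δ μ) (n1 k1 : ℕ) (hk1 : 1 ≤ k1)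
    (hk1' : (k1 : ℝ) = 3 * δ * n1) :
    ENNReal.ofReal
        (Real.exp (-(d * Real.exp (-2 * δ ^ 2 * n1) /
          (1 - Real.exp (-2 * δ ^ 2 * n1)) ^ 2))) ≤
      Measure.pi (fun _ : Fin d => μ)
        (GammaFull d δ μ (fun l => l * n1) (fun l => l * k1)) ∧
      0 < Measure.pi (fun _ : Fin d => μ)
        (GammaFull d δ μ (fun l => l * n1) (fun l => l * k1)) := by
  classical
  have hδs : δ ≤ 1/32 := delta_small d hd δ hδ0 hδ hδd
  have hn1 : 1 ≤ n1 := by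
    rcases Nat.eq_zero_or_pos n1 with h | h
    · exfalso
      rw [h] at hk1'
      simp at hk1'
      omega
    · exact h
  set Z := Real.exp (-2 * δ ^ 2 * n1) with hZ
  have hZ0 : 0 < Z := Real.exp_pos _
  have hZ1 : Z < 1 := by
    rw [hZ, Real.exp_lt_one_iff]
    have h1 : (1:ℝ) ≤ (n1:ℝ) := by exact_mod_cast hn1
    nlinarith
  haveI : SigmaFinite μ := by
    refine MeasureTheory.Measure.sigmaFinite_of_countable
      (S := Set.range (fun j : ℤ => Set.Ico (j:ℝ) (j+1))) (Set.countable_range _) ?_ ?_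
    · rintro s ⟨j, rfl⟩
      have h := hμ j 0 0 (by norm_num)
      norm_num at h
      rw [h]
      simp [ternaryOnes]
    · rw [Set.sUnion_range]
      exact iUnion_Ico_intCast ℝ
  have hK1meas : ∀ l, MeasurableSet (⋃ i ∈ GFin δ μ n1 k1 l, triIco (NN n1 l) i) :=
    fun l => Finset.measurableSet_biUnion _ (fun i _ => measurableSet_Ico)
  have hK1mu : ∀ l, μ (⋃ i ∈ GFin δ μ n1 k1 l, triIco (NN n1 l) i)
      = ENNReal.ofReal (Wsum δ μ n1 k1 l) := by
    intro l
    rw [measure_biUnion_finset (fun i _ j _ hne => triIco_disjoint _ hne)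
      (fun i _ => measurableSet_Ico)]
    rw [Wsum, ENNReal.ofReal_sum_of_nonneg (fun i _ => wgt_nonneg hδ0 hδ _ _)]
    refine Finset.sum_congr rfl fun i hi => ?_
    rw [mu_triIco hμ _ i (GFin_lt δ μ n1 k1 l i hi)]
    rfl
  have hνK : ∀ l, Measure.pi (fun _ : Fin d => μ)
      (bigK d δ μ (fun l => l * n1) (fun l => l * k1) l)
      = ENNReal.ofReal (Wsum δ μ n1 k1 l) ^ d := by
    intro l
    rw [bigK_eq d δ μ n1 k1 l, Measure.pi_pi]
    rw [hK1mu l, Finset.prod_const, Finset.card_univ, Fintype.card_fin]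
  have hreal : ∀ l, Real.exp (-(Z/(1-Z)^2)) ≤ Wsum δ μ n1 k1 l := by
    intro l
    rw [Wsum_eq_prod]
    refine (prod_one_sub_ge Z hZ0 hZ1 l).trans (Finset.prod_le_prod ?_ ?_)
    · intro m _
      have := pow_le_one₀ hZ0.le hZ1.le (n := m+1)
      linarith
    · intro m _
      have hkm : (((m+1)*k1 : ℕ) : ℝ) = 3 * δ * (((m+1)*n1 : ℕ) : ℝ) := by
        push_cast
        rw [hk1']
        ring
      have hG := Gsum_ge hδ0 hδ hδs hμ ((m+1)*n1) ((m+1)*k1) hkm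
      have hZm : Real.exp (-2*δ^2*(((m+1)*n1 : ℕ) : ℝ)) = Z^(m+1) := by
        rw [hZ, ← Real.exp_nat_mul]
        congr 1
        push_cast
        ring
      rw [← hZm]
      exact hG
  have hbound : ∀ l, ENNReal.ofReal (Real.exp (-(d * Z/(1-Z)^2)))
      ≤ Measure.pi (fun _ : Fin d => μ)
        (bigK d δ μ (fun l => l * n1) (fun l => l * k1) l) := by
    intro l
    rw [hνK l]
    have e1 : Real.exp (-(d * Z/(1-Z)^2)) = Real.exp (-(Z/(1-Z)^2)) ^ d := by
      rw [← Real.exp_nat_mul]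
      congr 1
      ring
    rw [e1, ENNReal.ofReal_pow (Real.exp_pos _).le]
    gcongr
    exact hreal l
  have hsub1 : ∀ l, (⋃ i ∈ GFin δ μ n1 k1 (l+1), triIco (NN n1 (l+1)) i)
      ⊆ ⋃ i ∈ GFin δ μ n1 k1 l, triIco (NN n1 l) i := by
    intro l x hx
    rw [Set.mem_iUnion₂] at hx ⊢
    obtain ⟨i, hi, hxi⟩ := hx
    simp only [GFin, Finset.mem_image, Finset.mem_product] at hi
    obtain ⟨p, ⟨hp1, hp2⟩, rfl⟩ := hi
    exact ⟨p.1, hp1, triIco_subset (NN n1 l) ((l+1)*n1) p.1 p.2 (goodF_lt hp2) hxi⟩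
  have hanti : Antitone (fun l => bigK d δ μ (fun l => l * n1) (fun l => l * k1) l) := by
    refine antitone_nat_of_succ_le fun l => ?_
    rw [bigK_eq d δ μ n1 k1 (l+1), bigK_eq d δ μ n1 k1 l]
    exact Set.pi_mono (fun j _ => hsub1 l)
  have hmeasb : ∀ l, MeasurableSet (bigK d δ μ (fun l => l * n1) (fun l => l * k1) l) := by
    intro l
    rw [bigK_eq d δ μ n1 k1 l]
    exact MeasurableSet.univ_pi (fun j => hK1meas l)
  have hfin : Measure.pi (fun _ : Fin d => μ)
      (bigK d δ μ (fun l => l * n1) (fun l => l * k1) 0) ≠ ⊤ := by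
    rw [hνK 0]
    exact ENNReal.pow_ne_top ENNReal.ofReal_ne_top
  have ht := tendsto_measure_iInter_atTop
    (μ := Measure.pi (fun _ : Fin d => μ))
    (fun l => (hmeasb l).nullMeasurableSet) hanti ⟨0, hfin⟩
  have hiInter : ENNReal.ofReal (Real.exp (-(d * Z/(1-Z)^2)))
      ≤ Measure.pi (fun _ : Fin d => μ)
        (⋂ l, bigK d δ μ (fun l => l * n1) (fun l => l * k1) l) :=
    ge_of_tendsto' ht hbound
  have hsub2 : (⋂ l, bigK d δ μ (fun l => l * n1) (fun l => l * k1) l)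
      ⊆ GammaFull d δ μ (fun l => l * n1) (fun l => l * k1) := by
    refine subset_trans ?_ Set.subset_union_right
    intro x hx
    rw [Set.mem_iInter] at hx
    exact Set.mem_biInter (fun l _ => hx l)
  have hfinal : ENNReal.ofReal (Real.exp (-(d * Z/(1-Z)^2)))
      ≤ Measure.pi (fun _ : Fin d => μ)
        (GammaFull d δ μ (fun l => l * n1) (fun l => l * k1)) :=
    hiInter.trans (measure_mono hsub2)
  exact ⟨hfinal, lt_of_lt_of_le (ENNReal.ofReal_pos.mpr (Real.exp_pos _)) hfinal⟩
end
end
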